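/- arXiv:1604.02617 — 9 statements merged into one kernel-verified Lean document; each statement's English description precedes it below -/
import Mathlib

section
/- Let Q be a real d×d matrix whose off-diagonal entries are nonnegative and whose columns each sum to zero, and let λ ∈ ℝ^d have all entries strictly positive. Then the matrix Q_λ := Q − diag(λ) is invertible. -/
/-- An intensity matrix minus a positive diagonal is invertible. -/
theorem stmt_0 (d : ℕ) (hd : 1 ≤ d) (Q : Matrix (Fin d) (Fin d) ℝ)
    (hQoff : ∀ i j, i ≠ j → 0 ≤ Q i j)
    (hQcol : ∀ j, ∑ i, Q i j = 0)
    (l : Fin d → ℝ) (hl : ∀ i, 0 < l i) :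
    IsUnit (Q - Matrix.diagonal l) := by
  rw [Matrix.isUnit_iff_isUnit_det, isUnit_iff_ne_zero]
  apply det_ne_zero_of_sum_col_lt_diag
  intro k
  have hdiag : Q k k = -∑ i ∈ Finset.univ.erase k, Q i k := by
    have := hQcol k
    rw [← Finset.add_sum_erase _ _ (Finset.mem_univ k)] at this
    linarith
  have hsum : ∀ i ∈ Finset.univ.erase k, ‖(Q - Matrix.diagonal l) i k‖ = Q i k := by
    intro i hi
    have hik : i ≠ k := Finset.ne_of_mem_erase hi
    simp [Matrix.diagonal_apply_ne _ hik, Real.norm_eq_abs,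
      abs_of_nonneg (hQoff i k hik)]
  rw [Finset.sum_congr rfl hsum]
  have hkk : (Q - Matrix.diagonal l) k k = Q k k - l k := by
    simp [Matrix.diagonal]
  have hQkk : Q k k ≤ 0 := by
    rw [hdiag]
    simp only [neg_nonpos]
    exact Finset.sum_nonneg fun i hi => hQoff i k (Finset.ne_of_mem_erase hi)
  rw [hkk, Real.norm_eq_abs, abs_of_nonpos (by linarith [hl k]), hdiag]
  linarith [hl k]
end

section
/- Let Q be a real d×d matrix whose off-diagonal entries are nonnegative and whose columns each sum to zero, and let λ ∈ ℝ^d have all entries strictly positive. Then exp(t(Q − diag(λ))) tends to the zero matrix as t → ∞. -/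
open NormedSpace Filter
open scoped Matrix

section Aux

variable {𝔸 : Type*} [NormedRing 𝔸] [NormOneClass 𝔸] [NormedAlgebra ℝ 𝔸] [CompleteSpace 𝔸]

omit [CompleteSpace 𝔸] in
lemma aux_norm_exp_le (x : 𝔸) : ‖exp x‖ ≤ Real.exp ‖x‖ := by
  rw [exp_eq_tsum ℝ]
  refine (norm_tsum_le_tsum_norm (norm_expSeries_summable' x)).trans ?_
  rw [Real.exp_eq_exp_ℝ, exp_eq_tsum ℝ]
  have hsum : Summable fun n : ℕ => ((n.factorial : ℝ))⁻¹ • ‖x‖ ^ n := by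
    simpa [norm_smul, abs_of_nonneg, smul_eq_mul] using
      (norm_expSeries_summable' (𝕂 := ℝ) (‖x‖ : ℝ))
  refine (Summable.tsum_le_tsum (fun n => ?_) (norm_expSeries_summable' x) hsum).trans_eq ?_
  · rw [norm_smul, smul_eq_mul, norm_inv, RCLike.norm_natCast]
    gcongr
    exact norm_pow_le x n
  · exact tsum_congr fun n => rfl

end Aux

/-- For an intensity matrix `Q` and positive `λ`, `exp(t(Q − diag λ)) → 0` as `t → ∞`. -/
theorem stmt_1 (d : ℕ) (hd : 1 ≤ d) (Q : Matrix (Fin d) (Fin d) ℝ)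
    (hQoff : ∀ i j, i ≠ j → 0 ≤ Q i j)
    (hQcol : ∀ j, ∑ i, Q i j = 0)
    (l : Fin d → ℝ) (hl : ∀ i, 0 < l i) :
    Tendsto (fun t : ℝ => exp (t • (Q - Matrix.diagonal l))) atTop (nhds 0) := by
  haveI : Nonempty (Fin d) := Fin.pos_iff_nonempty.mp hd
  letI : SeminormedRing (Matrix (Fin d) (Fin d) ℝ) := Matrix.linftyOpSemiNormedRing
  letI : NormedRing (Matrix (Fin d) (Fin d) ℝ) := Matrix.linftyOpNormedRing
  letI : NormedAlgebra ℝ (Matrix (Fin d) (Fin d) ℝ) := Matrix.linftyOpNormedAlgebra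
  have hne : (Finset.univ : Finset (Fin d)).Nonempty := Finset.univ_nonempty
  set A : Matrix (Fin d) (Fin d) ℝ := Qᵀ - Matrix.diagonal l with hA
  set ε : ℝ := Finset.univ.inf' hne l with hε
  have hεpos : 0 < ε := by
    rw [hε]
    exact (Finset.lt_inf'_iff hne).mpr fun i _ => hl i
  have hεle : ∀ i, ε ≤ l i := fun i => Finset.inf'_le _ (Finset.mem_univ i)
  set c : ℝ := Finset.univ.sup' hne (fun i => l i + |Q i i|) with hc
  have hcge : ∀ i, l i + |Q i i| ≤ c := fun i => Finset.le_sup' (fun i => l i + |Q i i|) (Finset.mem_univ i)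
  set B : Matrix (Fin d) (Fin d) ℝ := A + c • (1 : Matrix (Fin d) (Fin d) ℝ) with hB
  have hBdiag : ∀ i, B i i = Q i i - l i + c := by
    intro i
    simp [hB, hA, Matrix.sub_apply, Matrix.one_apply, Matrix.diagonal_apply,
      Matrix.transpose_apply, Matrix.smul_apply]
  have hBoff : ∀ i j, i ≠ j → B i j = Q j i := by
    intro i j h
    simp [hB, hA, Matrix.sub_apply, Matrix.one_apply, Matrix.diagonal_apply,
      Matrix.transpose_apply, Matrix.smul_apply, h]
  have hBnn : ∀ i j, 0 ≤ B i j := by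
    intro i j
    by_cases h : i = j
    · subst h
      rw [hBdiag]
      have := hcge i
      have := neg_abs_le (Q i i)
      linarith
    · rw [hBoff i j h]
      exact hQoff j i (fun hji => h hji.symm)
  have hrow : ∀ i, ∑ j, B i j = c - l i := by
    intro i
    have hQrow : ∑ j, Q j i = 0 := hQcol i
    have : ∀ j, B i j = Q j i + (if i = j then c - l i else 0) := by
      intro j
      by_cases h : i = j
      · subst h; rw [hBdiag]; simp; ring
      · rw [hBoff i j h]; simp [h]
    simp only [this]
    rw [Finset.sum_add_distrib, hQrow, Finset.sum_ite_eq]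
    simp
  -- norm bound on B
  have hBnorm : ‖B‖ ≤ c - ε := by
    have hcε : (0 : ℝ) ≤ c - ε := by
      obtain ⟨i⟩ := (inferInstance : Nonempty (Fin d))
      have h1 := hcge i
      have h2 := hεle i
      have := abs_nonneg (Q i i)
      linarith
    rw [Matrix.linfty_opNorm_def]
    have : (Finset.univ.sup fun i : Fin d => ∑ j, ‖B i j‖₊) ≤ ⟨c - ε, hcε⟩ := by
      refine Finset.sup_le fun i _ => ?_
      apply NNReal.coe_le_coe.mp
      push_cast
      have hs : ∑ j, ‖B i j‖ = ∑ j, B i j := by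
        refine Finset.sum_congr rfl fun j _ => ?_
        rw [Real.norm_eq_abs, abs_of_nonneg (hBnn i j)]
      rw [hs, hrow i]
      have := hεle i
      change _ ≤ c - ε
      linarith
    exact_mod_cast this
  -- key estimate
  have key : ∀ t : ℝ, 0 ≤ t → ‖exp (t • A)‖ ≤ Real.exp (-(ε * t)) := by
    intro t ht
    have hsplit : t • A = t • B + (-(t * c)) • (1 : Matrix (Fin d) (Fin d) ℝ) := by
      rw [hB]
      module
    have hcomm : Commute (t • B) ((-(t * c)) • (1 : Matrix (Fin d) (Fin d) ℝ)) :=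
      ((Commute.one_right (t • B)).smul_right _)
    rw [hsplit, Matrix.exp_add_of_commute _ _ hcomm]
    have h1 : exp ((-(t * c)) • (1 : Matrix (Fin d) (Fin d) ℝ))
        = Real.exp (-(t * c)) • (1 : Matrix (Fin d) (Fin d) ℝ) := by
      have h2 := NormedSpace.algebraMap_exp_comm (𝕂 := ℝ)
        (𝔸 := Matrix (Fin d) (Fin d) ℝ) (-(t * c))
      rw [Algebra.algebraMap_eq_smul_one, Algebra.algebraMap_eq_smul_one] at h2
      rw [Real.exp_eq_exp_ℝ]
      exact h2.symm
    rw [h1]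
    calc ‖exp (t • B) * (Real.exp (-(t * c)) • (1 : Matrix (Fin d) (Fin d) ℝ))‖
        ≤ ‖exp (t • B)‖ * ‖Real.exp (-(t * c)) • (1 : Matrix (Fin d) (Fin d) ℝ)‖ :=
          norm_mul_le _ _
      _ = ‖exp (t • B)‖ * Real.exp (-(t * c)) := by
          rw [norm_smul, norm_one, mul_one, Real.norm_eq_abs,
            abs_of_pos (Real.exp_pos _)]
      _ ≤ Real.exp ‖t • B‖ * Real.exp (-(t * c)) :=
          mul_le_mul_of_nonneg_right (aux_norm_exp_le _) (Real.exp_pos _).le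
      _ ≤ Real.exp (t * (c - ε)) * Real.exp (-(t * c)) := by
          refine mul_le_mul_of_nonneg_right (Real.exp_le_exp.mpr ?_) (Real.exp_pos _).le
          rw [norm_smul, Real.norm_eq_abs, abs_of_nonneg ht]
          exact mul_le_mul_of_nonneg_left hBnorm ht
      _ = Real.exp (-(ε * t)) := by
          rw [← Real.exp_add]; ring_nf
  -- convergence for A
  have hAtend : Tendsto (fun t : ℝ => exp (t • A)) atTop (nhds 0) := by
    refine squeeze_zero_norm' (a := fun t : ℝ => Real.exp (-(ε * t))) ?_ ?_
    · filter_upwards [eventually_ge_atTop (0 : ℝ)] with t ht using key t ht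
    · have h1 : Tendsto (fun t : ℝ => ε * t) atTop atTop :=
        Tendsto.const_mul_atTop hεpos tendsto_id
      exact Real.tendsto_exp_atBot.comp (tendsto_neg_atTop_atBot.comp h1)
  -- transfer to the original statement via transpose
  have heq : ∀ t : ℝ, exp (t • (Q - Matrix.diagonal l)) = (exp (t • A))ᵀ := by
    intro t
    rw [← Matrix.exp_transpose]
    congr 1
    rw [Matrix.transpose_smul, hA, Matrix.transpose_sub, Matrix.transpose_transpose,
      Matrix.diagonal_transpose]
  simp only [heq]
  have hct : Continuous (Matrix.transpose : Matrix (Fin d) (Fin d) ℝ → _) :=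
    continuous_id.matrix_transpose
  have := (hct.tendsto 0).comp hAtend
  exact this
end

section
/- Let Q' be a real d×d matrix whose off-diagonal entries are nonnegative and whose columns each sum to zero. Then the matrix I − Q' is invertible. -/
/-- For an intensity matrix `Q'`, the matrix `I − Q'` is invertible. -/
theorem stmt_2 (d : ℕ) (hd : 1 ≤ d) (Q' : Matrix (Fin d) (Fin d) ℝ)
    (hQoff : ∀ i j, i ≠ j → 0 ≤ Q' i j)
    (hQcol : ∀ j, ∑ i, Q' i j = 0) :
    IsUnit ((1 : Matrix (Fin d) (Fin d) ℝ) - Q') := by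
  rw [Matrix.isUnit_iff_isUnit_det, isUnit_iff_ne_zero]
  apply det_ne_zero_of_sum_col_lt_diag
  intro k
  have hdiag : Q' k k = -∑ i ∈ Finset.univ.erase k, Q' i k := by
    have := hQcol k
    rw [← Finset.sum_erase_add _ _ (Finset.mem_univ k)] at this
    linarith
  have hsum : 0 ≤ ∑ i ∈ Finset.univ.erase k, Q' i k :=
    Finset.sum_nonneg fun i hi => hQoff i k (Finset.ne_of_mem_erase hi)
  have h1 : ∑ i ∈ Finset.univ.erase k, ‖((1 : Matrix (Fin d) (Fin d) ℝ) - Q') i k‖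
      = ∑ i ∈ Finset.univ.erase k, Q' i k := by
    apply Finset.sum_congr rfl
    intro i hi
    have hik := Finset.ne_of_mem_erase hi
    simp [Matrix.sub_apply, Matrix.one_apply_ne hik, abs_of_nonneg (hQoff i k hik)]
  have h2 : ((1 : Matrix (Fin d) (Fin d) ℝ) - Q') k k
      = 1 + ∑ i ∈ Finset.univ.erase k, Q' i k := by
    rw [Matrix.sub_apply, Matrix.one_apply_eq, hdiag]
    ring
  rw [h1, h2, Real.norm_eq_abs, abs_of_nonneg (by linarith)]
  linarith
end

section
/- Let Q be any real d×d matrix and λ ∈ ℝ^d. For n ∈ ℕ, let A be the real (n+1)×(n+1) matrix (rows and columns indexed by 0,…,n) with A_{ii} = −(n−i), A_{i+1,i} = n−i for 0 ≤ i ≤ n−1, and all other entries zero; let 𝐐 = A ⊗ diag(λ) + I_{n+1} ⊗ Q. Let V and W be the (n+1)×(n+1) matrices with V_{ij} = (−1)^{i−j}·C(n−j, n−i) for i ≥ j, V_{ij} = 0 for i < j, and W_{ij} = C(n−j, n−i). Then (W ⊗ I_d)·𝐐·(V ⊗ I_d) = I_{n+1} ⊗ Q − D ⊗ diag(λ), where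 D is the (n+1)×(n+1) diagonal matrix with D_{ii} = n−i; that is, the conjugated matrix is block diagonal with i-th diagonal block Q − (n−i)·diag(λ). -/
open Finset


lemma alt_sum (m : ℕ) :
    ∑ t ∈ range (m + 1), (-1 : ℝ) ^ (m - t) * (m.choose t : ℝ) = if m = 0 then 1 else 0 := by
  have h := add_pow (1 : ℝ) (-1) m
  simp only [one_pow, one_mul, add_neg_cancel] at h
  rw [← h]
  cases m <;> simp

lemma key_sum (a c N : ℕ) (hc : c ≤ N) :
    ∑ b ∈ range (N + 1), (-1 : ℝ) ^ (c - b) * (c.choose b : ℝ) * (b.choose a : ℝ)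
      = if a = c then 1 else 0 := by
  have hsub : ∑ b ∈ range (N + 1), (-1 : ℝ) ^ (c - b) * (c.choose b : ℝ) * (b.choose a : ℝ)
      = ∑ b ∈ range (c + 1), (-1 : ℝ) ^ (c - b) * (c.choose b : ℝ) * (b.choose a : ℝ) := by
    refine (Finset.sum_subset (by simpa using by omega : range (c+1) ⊆ range (N+1)) ?_).symm
    intro b _ hb
    simp only [mem_range, not_lt] at hb
    rw [Nat.choose_eq_zero_of_lt (show c < b by omega)]
    simp
  rw [hsub]
  by_cases hac : a ≤ c
  · rw [range_eq_Ico, ← Finset.sum_Ico_consecutive _ (Nat.zero_le a) (by omega : a ≤ c + 1)]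
    have h1 : ∑ b ∈ Ico 0 a, (-1 : ℝ) ^ (c - b) * (c.choose b : ℝ) * (b.choose a : ℝ) = 0 := by
      apply Finset.sum_eq_zero
      intro b hb
      simp only [mem_Ico] at hb
      rw [Nat.choose_eq_zero_of_lt (show b < a by omega)]
      simp
    rw [h1, zero_add, Finset.sum_Ico_eq_sum_range]
    have hlen : c + 1 - a = (c - a) + 1 := by omega
    rw [hlen]
    have h2 : ∀ t ∈ range ((c - a) + 1),
        (-1 : ℝ) ^ (c - (a + t)) * (c.choose (a + t) : ℝ) * ((a + t).choose a : ℝ)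
        = (c.choose a : ℝ) * ((-1 : ℝ) ^ ((c - a) - t) * ((c - a).choose t : ℝ)) := by
      intro t ht
      simp only [mem_range] at ht
      have htri : c.choose (a + t) * (a + t).choose a = c.choose a * (c - a).choose t := by
        have := Nat.choose_mul (n := c) (show a ≤ a + t by omega)
        simpa using this
      have hexp : c - (a + t) = (c - a) - t := by omega
      rw [hexp]
      have hcast : (c.choose (a + t) : ℝ) * ((a + t).choose a : ℝ)
          = (c.choose a : ℝ) * ((c - a).choose t : ℝ) := by exact_mod_cast htri
      linear_combination (-1 : ℝ) ^ ((c - a) - t) * hcast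
    rw [Finset.sum_congr rfl h2, ← Finset.mul_sum, alt_sum]
    by_cases h : a = c
    · simp [h, Nat.choose_self]
    · have : ¬ (c - a = 0) := by omega
      simp [h, this]
  · have : ∀ b ∈ range (c + 1), (-1 : ℝ) ^ (c - b) * (c.choose b : ℝ) * (b.choose a : ℝ) = 0 := by
      intro b hb
      simp only [mem_range] at hb
      rw [Nat.choose_eq_zero_of_lt (show b < a by omega)]
      simp
    rw [Finset.sum_eq_zero this, if_neg (by omega)]

lemma WV_eq_one (n : ℕ) (V W : Matrix (Fin (n + 1)) (Fin (n + 1)) ℝ)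
    (hV : ∀ i j : Fin (n + 1), V i j =
      if (j : ℕ) ≤ (i : ℕ) then (-1 : ℝ) ^ ((i : ℕ) - (j : ℕ)) * (Nat.choose (n - j) (n - i)) else 0)
    (hW : ∀ i j : Fin (n + 1), W i j = (Nat.choose (n - j) (n - i) : ℝ)) :
    W * V = 1 := by
  ext i j
  rw [Matrix.mul_apply, Matrix.one_apply]
  have hterm : ∀ k : Fin (n + 1), W i k * V k j =
      (-1 : ℝ) ^ ((n - (j : ℕ)) - (n - (k : ℕ))) * ((n - (j : ℕ)).choose (n - (k : ℕ)) : ℝ)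
        * ((n - (k : ℕ)).choose (n - (i : ℕ)) : ℝ) := by
    intro k
    rw [hW, hV]
    by_cases h : (j : ℕ) ≤ (k : ℕ)
    · rw [if_pos h]
      have : (k : ℕ) - (j : ℕ) = (n - (j : ℕ)) - (n - (k : ℕ)) := by
        have := k.isLt; have := j.isLt; omega
      rw [this]; ring
    · rw [if_neg h, Nat.choose_eq_zero_of_lt
        (show n - (j : ℕ) < n - (k : ℕ) by have := k.isLt; have := j.isLt; omega)]
      simp
  rw [Finset.sum_congr rfl (fun k _ => hterm k)]
  have hre : ∑ k : Fin (n + 1),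
      (-1 : ℝ) ^ ((n - (j : ℕ)) - (n - (k : ℕ))) * ((n - (j : ℕ)).choose (n - (k : ℕ)) : ℝ)
        * ((n - (k : ℕ)).choose (n - (i : ℕ)) : ℝ)
      = ∑ b ∈ range (n + 1),
      (-1 : ℝ) ^ ((n - (j : ℕ)) - b) * ((n - (j : ℕ)).choose b : ℝ)
        * (b.choose (n - (i : ℕ)) : ℝ) := by
    rw [Fin.sum_univ_eq_sum_range (fun k => (-1 : ℝ) ^ ((n - (j : ℕ)) - (n - k)) *
      ((n - (j : ℕ)).choose (n - k) : ℝ) * ((n - k).choose (n - (i : ℕ)) : ℝ))]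
    have := Finset.sum_range_reflect (fun b => (-1 : ℝ) ^ ((n - (j : ℕ)) - b) *
      ((n - (j : ℕ)).choose b : ℝ) * (b.choose (n - (i : ℕ)) : ℝ)) (n + 1)
    simp only [Nat.add_sub_cancel] at this
    exact this
  rw [hre, key_sum _ _ _ (by omega)]
  have := i.isLt; have := j.isLt
  by_cases h : i = j
  · rw [if_pos h, if_pos (by rw [h])]
  · rw [if_neg h, if_neg (by rw [Fin.ext_iff] at h; omega)]

lemma AV_eq (n : ℕ) (A V : Matrix (Fin (n + 1)) (Fin (n + 1)) ℝ)
    (hA : ∀ i j : Fin (n + 1), A i j =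
      if i = j then -((n - (i : ℕ) : ℕ) : ℝ)
      else if (i : ℕ) = (j : ℕ) + 1 then ((n - (j : ℕ) : ℕ) : ℝ) else 0)
    (hV : ∀ i j : Fin (n + 1), V i j =
      if (j : ℕ) ≤ (i : ℕ) then (-1 : ℝ) ^ ((i : ℕ) - (j : ℕ)) * (Nat.choose (n - j) (n - i)) else 0) :
    A * V = -(V * Matrix.diagonal (fun j : Fin (n + 1) => ((n - (j : ℕ) : ℕ) : ℝ))) := by
  ext k j
  rw [Matrix.mul_apply, Matrix.neg_apply, Matrix.mul_diagonal]
  have hterm : ∀ m : Fin (n + 1), A k m * V m j =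
      (if k = m then -((n - (k : ℕ) : ℕ) : ℝ) * V m j else 0)
      + (if (k : ℕ) = (m : ℕ) + 1 then ((n - (m : ℕ) : ℕ) : ℝ) * V m j else 0) := by
    intro m
    rw [hA]
    by_cases h1 : k = m
    · have h2 : ¬((k : ℕ) = (m : ℕ) + 1) := by subst h1; omega
      rw [if_pos h1, if_pos h1, if_neg h2, add_zero]
    · rw [if_neg h1, if_neg h1, zero_add]
      by_cases h2 : (k : ℕ) = (m : ℕ) + 1
      · rw [if_pos h2, if_pos h2]
      · rw [if_neg h2, if_neg h2, zero_mul]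
  rw [Finset.sum_congr rfl (fun m _ => hterm m), Finset.sum_add_distrib,
    Finset.sum_ite_eq univ k (fun m => -((n - (k : ℕ) : ℕ) : ℝ) * V m j), if_pos (mem_univ k)]
  have hkn : (k : ℕ) ≤ n := by have := k.isLt; omega
  have hjn : (j : ℕ) ≤ n := by have := j.isLt; omega
  by_cases hk0 : (k : ℕ) = 0
  · have hz : ∑ m : Fin (n + 1),
        (if (k : ℕ) = (m : ℕ) + 1 then ((n - (m : ℕ) : ℕ) : ℝ) * V m j else 0) = 0 := by
      apply Finset.sum_eq_zero; intro m _; rw [if_neg (by omega)]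
    rw [hz, add_zero]
    by_cases hj : (j : ℕ) = 0
    · have : j = k := by rw [Fin.ext_iff]; omega
      subst this
      ring
    · have hV0 : V k j = 0 := by rw [hV, if_neg (by omega)]
      rw [hV0]; ring
  · -- k ≥ 1
    set k' : Fin (n + 1) := ⟨(k : ℕ) - 1, by omega⟩ with hk'
    have hk'v : (k' : ℕ) = (k : ℕ) - 1 := rfl
    have hcond : ∀ m : Fin (n + 1), ((k : ℕ) = (m : ℕ) + 1) ↔ m = k' := by
      intro m
      rw [Fin.ext_iff, hk'v]
      omega
    have hz : (∑ m : Fin (n + 1),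
        if (k : ℕ) = (m : ℕ) + 1 then ((n - (m : ℕ) : ℕ) : ℝ) * V m j else 0)
        = ((n - ((k : ℕ) - 1) : ℕ) : ℝ) * V k' j := by
      rw [Finset.sum_congr rfl (fun m _ => if_congr (hcond m) rfl rfl),
        Finset.sum_ite_eq' univ k' (fun m => ((n - (m : ℕ) : ℕ) : ℝ) * V m j),
        if_pos (mem_univ k')]
    rw [hz]
    by_cases hj1 : (j : ℕ) ≤ (k : ℕ) - 1
    · have hjk : (j : ℕ) ≤ (k : ℕ) := by omega
      rw [hV, hV, if_pos hjk, if_pos (by rw [hk'v]; exact hj1), hk'v]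
      have e1 : n - ((k : ℕ) - 1) = (n - (k : ℕ)) + 1 := by omega
      have hs : (-1 : ℝ) ^ ((k : ℕ) - (j : ℕ))
          = (-1 : ℝ) ^ ((k : ℕ) - 1 - (j : ℕ)) * (-1) := by
        rw [← pow_succ]
        congr 1
        omega
      have hnat : (n - (j : ℕ)).choose ((n - (k : ℕ)) + 1) * ((n - (k : ℕ)) + 1)
          = (n - (j : ℕ)).choose (n - (k : ℕ)) * ((k : ℕ) - (j : ℕ)) := by
        rw [Nat.choose_succ_right_eq]
        congr 1
        omega
      have hd : (n - (j : ℕ)) = ((k : ℕ) - (j : ℕ)) + (n - (k : ℕ)) := by omega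
      have hcast : ((n - (j : ℕ)).choose ((n - (k : ℕ)) + 1) : ℝ) * (((n - (k : ℕ)) : ℕ) + 1 : ℝ)
          = ((n - (j : ℕ)).choose (n - (k : ℕ)) : ℝ) * (((k : ℕ) - (j : ℕ) : ℕ) : ℝ) := by
        exact_mod_cast hnat
      have hdd : ((n - (j : ℕ) : ℕ) : ℝ)
          = (((k : ℕ) - (j : ℕ) : ℕ) : ℝ) + ((n - (k : ℕ) : ℕ) : ℝ) := by exact_mod_cast hd
      rw [e1, hs]
      push_cast
      linear_combination ((-1 : ℝ) ^ ((k : ℕ) - 1 - (j : ℕ))) * hcast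
        - ((-1 : ℝ) ^ ((k : ℕ) - 1 - (j : ℕ))) * ((n - (j : ℕ)).choose (n - (k : ℕ)) : ℝ) * hdd
    · by_cases hj2 : (j : ℕ) = (k : ℕ)
      · rw [hV, hV, if_pos (by omega), if_neg (by rw [hk'v]; omega)]
        rw [show (k : ℕ) - (j : ℕ) = 0 by omega, show n - (j : ℕ) = n - (k : ℕ) by omega,
          Nat.choose_self]
        ring
      · have hnle : ¬ ((j : ℕ) ≤ (k : ℕ)) := by omega
        rw [hV, hV, if_neg hnle, if_neg (by rw [hk'v]; omega)]
        ring

lemma neg_kron {p d : ℕ} (D : Matrix (Fin p) (Fin p) ℝ) (B : Matrix (Fin d) (Fin d) ℝ) :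
    Matrix.kroneckerMap (· * ·) (-D) B = -(Matrix.kroneckerMap (· * ·) D B) := by
  ext ⟨a, b⟩ ⟨c, e⟩
  simp [Matrix.kroneckerMap_apply]

open Kronecker

/-- Conjugating `bQ = A ⊗ diag(λ) + I ⊗ Q` by the binomial matrices block-diagonalizes it. -/
theorem stmt_4 (d : ℕ) (hd : 1 ≤ d) (n : ℕ)
    (Q : Matrix (Fin d) (Fin d) ℝ) (l : Fin d → ℝ)
    (A : Matrix (Fin (n + 1)) (Fin (n + 1)) ℝ)
    (hA : ∀ i j : Fin (n + 1), A i j =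
      if i = j then -((n - (i : ℕ) : ℕ) : ℝ)
      else if (i : ℕ) = (j : ℕ) + 1 then ((n - (j : ℕ) : ℕ) : ℝ) else 0)
    (V W : Matrix (Fin (n + 1)) (Fin (n + 1)) ℝ)
    (hV : ∀ i j : Fin (n + 1), V i j =
      if (j : ℕ) ≤ (i : ℕ) then (-1 : ℝ) ^ ((i : ℕ) - (j : ℕ)) * (Nat.choose (n - j) (n - i)) else 0)
    (hW : ∀ i j : Fin (n + 1), W i j = (Nat.choose (n - j) (n - i) : ℝ))
    (bQ : Matrix (Fin (n + 1) × Fin d) (Fin (n + 1) × Fin d) ℝ)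
    (hbQ : bQ = A ⊗ₖ Matrix.diagonal l + (1 : Matrix (Fin (n + 1)) (Fin (n + 1)) ℝ) ⊗ₖ Q) :
    (W ⊗ₖ (1 : Matrix (Fin d) (Fin d) ℝ)) * bQ * (V ⊗ₖ (1 : Matrix (Fin d) (Fin d) ℝ)) =
      (1 : Matrix (Fin (n + 1)) (Fin (n + 1)) ℝ) ⊗ₖ Q -
        Matrix.diagonal (fun i : Fin (n + 1) => ((n - (i : ℕ) : ℕ) : ℝ)) ⊗ₖ Matrix.diagonal l := by

  have hWV : W * V = 1 := WV_eq_one n V W hV hW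
  have hAV : A * V =
      -(V * Matrix.diagonal fun j : Fin (n + 1) => ((n - (j : ℕ) : ℕ) : ℝ)) := AV_eq n A V hA hV
  have h1 : W * A * V = -(Matrix.diagonal fun i : Fin (n + 1) => ((n - (i : ℕ) : ℕ) : ℝ)) := by
    rw [Matrix.mul_assoc, hAV, Matrix.mul_neg, ← Matrix.mul_assoc, hWV, Matrix.one_mul]
  rw [hbQ, Matrix.mul_add, Matrix.add_mul, ← Matrix.mul_kronecker_mul, ← Matrix.mul_kronecker_mul,
    ← Matrix.mul_kronecker_mul, ← Matrix.mul_kronecker_mul, Matrix.one_mul, Matrix.mul_one,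
    Matrix.mul_one, h1, hWV, Matrix.one_mul, neg_kron, neg_add_eq_sub, Matrix.mul_one]
end

section
/- Let Q be a real d×d matrix and λ ∈ ℝ^d. For n ∈ ℕ, let A be the real (n+1)×(n+1) matrix with A_{ii} = −(n−i), A_{i+1,i} = n−i, other entries zero, and let 𝐐 = A ⊗ diag(λ) + I_{n+1} ⊗ Q. For t ∈ ℝ write F(t) = exp(t𝐐), and let F_{ij}(t) = (e_iᵀ ⊗ I_d)·F(t)·(e_j ⊗ I_d) denote its (i,j) d×d block, 0 ≤ i,j ≤ n. Then F_{ij}(t) = 0 whenever i < j, and for i ≥ j one has F_{ij}(t) = C(n−j, n−i) · ∑_{k=j}^{i} (−1)^{i−k} C(i−j, i−k) · exp(t(Q − (n−k)·diag(λ))). -/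
open Kronecker NormedSpace

namespace Stmt5Aux

open Matrix Finset

theorem choose_key {n i j k : ℕ} (hj : j ≤ k) (hk : k ≤ i) (hi : i ≤ n) :
    Nat.choose (n - k) (i - k) * Nat.choose (n - j) (k - j) =
      Nat.choose (n - j) (n - i) * Nat.choose (i - j) (i - k) := by
  have h1 : Nat.choose (n - j) (n - i) = Nat.choose (n - j) (i - j) := by
    have e : n - i = (n - j) - (i - j) := by omega
    rw [e, Nat.choose_symm (by omega)]
  have h2 : Nat.choose (i - j) (i - k) = Nat.choose (i - j) (k - j) := by
    have e : i - k = (i - j) - (k - j) := by omega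
    rw [e, Nat.choose_symm (by omega)]
  have h3 := Nat.choose_mul (n := n - j) (k := i - j) (show k - j ≤ i - j by omega)
  rw [h1, h2]
  have e1 : (n - j) - (k - j) = n - k := by omega
  have e2 : (i - j) - (k - j) = i - k := by omega
  rw [e1, e2] at h3
  rw [h3]
  exact Nat.mul_comm _ _

theorem alt_sum_zero {i j : ℕ} (h : j < i) :
    ∑ k ∈ Finset.Icc j i, (-1 : ℝ) ^ (i - k) * (Nat.choose (i - j) (i - k) : ℝ) = 0 := by
  have hbij : ∑ k ∈ Finset.Icc j i, (-1 : ℝ) ^ (i - k) * (Nat.choose (i - j) (i - k) : ℝ) =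
      ∑ m ∈ Finset.range (i - j + 1), (-1 : ℝ) ^ m * (Nat.choose (i - j) m : ℝ) := by
    apply Finset.sum_nbij' (fun k => i - k) (fun m => i - m)
    · intro a ha; simp at ha ⊢; omega
    · intro a ha; simp at ha ⊢; omega
    · intro a ha; simp at ha ⊢; omega
    · intro a ha; simp at ha ⊢; omega
    · intro a ha; rfl
  rw [hbij]
  have := Int.alternating_sum_range_choose_of_ne (show i - j ≠ 0 by omega)
  have hcast : ((∑ m ∈ Finset.range (i - j + 1), (-1 : ℤ) ^ m * (Nat.choose (i - j) m : ℤ) : ℤ) : ℝ)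
      = ∑ m ∈ Finset.range (i - j + 1), (-1 : ℝ) ^ m * (Nat.choose (i - j) m : ℝ) := by
    push_cast; rfl
  rw [← hcast, this]; simp

noncomputable def P (n : ℕ) : Matrix (Fin (n + 1)) (Fin (n + 1)) ℝ :=
  Matrix.of fun i k => if (k : ℕ) ≤ (i : ℕ) then
    (-1 : ℝ) ^ ((i : ℕ) - (k : ℕ)) * (Nat.choose (n - (k : ℕ)) ((i : ℕ) - (k : ℕ)) : ℝ) else 0

noncomputable def Pi (n : ℕ) : Matrix (Fin (n + 1)) (Fin (n + 1)) ℝ :=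
  Matrix.of fun k j => if (j : ℕ) ≤ (k : ℕ) then
    (Nat.choose (n - (j : ℕ)) ((k : ℕ) - (j : ℕ)) : ℝ) else 0

/-- restrict a `Fin` sum to an `Icc` -/
theorem sum_fin_icc (n : ℕ) (i j : Fin (n + 1)) (f : ℕ → ℝ)
    (h : ∀ k : ℕ, k ≤ n → (k < j ∨ (i : ℕ) < k) → f k = 0) :
    ∑ k : Fin (n + 1), f (k : ℕ) = ∑ k ∈ Finset.Icc (j : ℕ) (i : ℕ), f k := by
  rw [Fin.sum_univ_eq_sum_range]
  symm
  apply Finset.sum_subset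
  · intro x hx; simp at hx ⊢; omega
  · intro x hx hx'; simp at hx hx'; exact h x (by omega) (by omega)

theorem P_entry_sum (n : ℕ) (i j : Fin (n + 1)) :
    ∑ k : Fin (n + 1), P n i k * Pi n k j =
      ∑ k ∈ Finset.Icc (j : ℕ) (i : ℕ),
        ((-1 : ℝ) ^ ((i : ℕ) - k) * (Nat.choose (n - k) ((i : ℕ) - k) : ℝ)) *
          (Nat.choose (n - (j : ℕ)) (k - (j : ℕ)) : ℝ) := by
  have h0 : (∑ k : Fin (n + 1), P n i k * Pi n k j) =
      ∑ k ∈ Finset.Icc (j : ℕ) (i : ℕ), (fun k : ℕ => (if k ≤ (i : ℕ) then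
        (-1 : ℝ) ^ ((i : ℕ) - k) * (Nat.choose (n - k) ((i : ℕ) - k) : ℝ) else 0) *
        (if (j : ℕ) ≤ k then (Nat.choose (n - (j : ℕ)) (k - (j : ℕ)) : ℝ) else 0)) k :=
    sum_fin_icc n i j (fun k : ℕ => (if k ≤ (i : ℕ) then
        (-1 : ℝ) ^ ((i : ℕ) - k) * (Nat.choose (n - k) ((i : ℕ) - k) : ℝ) else 0) *
        (if (j : ℕ) ≤ k then (Nat.choose (n - (j : ℕ)) (k - (j : ℕ)) : ℝ) else 0))
      (by intro k hk hcase
          beta_reduce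
          rcases hcase with h | h
          · rw [if_neg (show ¬ (j : ℕ) ≤ k by omega)]; ring
          · rw [if_neg (show ¬ k ≤ (i : ℕ) by omega)]; ring)
  rw [h0]
  apply Finset.sum_congr rfl
  intro k hk
  simp only [Finset.mem_Icc] at hk
  beta_reduce
  rw [if_pos hk.2, if_pos hk.1]

theorem P_mul_Pi (n : ℕ) : P n * Pi n = 1 := by
  ext i j
  rw [Matrix.mul_apply, P_entry_sum, Matrix.one_apply]
  rcases lt_trichotomy (i : ℕ) (j : ℕ) with h | h | h
  · rw [if_neg (by intro he; rw [he] at h; omega), Finset.Icc_eq_empty (by omega),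
      Finset.sum_empty]
  · have : i = j := Fin.ext h
    rw [if_pos this, h, Finset.Icc_self, Finset.sum_singleton]
    simp
  · rw [if_neg (by intro he; rw [he] at h; omega)]
    have hcongr : ∀ k ∈ Finset.Icc (j : ℕ) (i : ℕ),
        ((-1 : ℝ) ^ ((i : ℕ) - k) * (Nat.choose (n - k) ((i : ℕ) - k) : ℝ)) *
          (Nat.choose (n - (j : ℕ)) (k - (j : ℕ)) : ℝ) =
        (Nat.choose (n - (j : ℕ)) (n - (i : ℕ)) : ℝ) *
          ((-1 : ℝ) ^ ((i : ℕ) - k) * (Nat.choose ((i : ℕ) - (j : ℕ)) ((i : ℕ) - k) : ℝ)) := by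
      intro k hk
      simp only [Finset.mem_Icc] at hk
      have := choose_key (n := n) (i := i) (j := j) (k := k) hk.1 hk.2 (by omega)
      have hc : ((Nat.choose (n - k) ((i : ℕ) - k) : ℝ)) * (Nat.choose (n - (j : ℕ)) (k - (j : ℕ)) : ℝ)
          = (Nat.choose (n - (j : ℕ)) (n - (i : ℕ)) : ℝ) * (Nat.choose ((i : ℕ) - (j : ℕ)) ((i : ℕ) - k) : ℝ) := by
        exact_mod_cast congrArg (Nat.cast : ℕ → ℝ) this
      rw [mul_assoc, hc]; ring
    rw [Finset.sum_congr rfl hcongr, ← Finset.mul_sum, alt_sum_zero h, mul_zero]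

theorem step (a c : ℕ) (h : c < a) :
    -(((a - (c + 1) : ℕ)) : ℝ) * ((-1 : ℝ) ^ (c + 1) * (Nat.choose a (c + 1) : ℝ)) +
      ((a - c : ℕ) : ℝ) * ((-1 : ℝ) ^ c * (Nat.choose a c : ℝ)) =
      (-1 : ℝ) ^ (c + 1) * (Nat.choose a (c + 1) : ℝ) * (-(a : ℝ)) := by
  have h1 := Nat.choose_succ_right_eq a c
  have hr : (a.choose (c + 1) : ℝ) * ((c : ℝ) + 1) = (a.choose c : ℝ) * ((a : ℝ) - c) := by
    have := congrArg (Nat.cast (R := ℝ)) h1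
    push_cast [Nat.cast_sub h.le] at this
    linarith
  rw [Nat.cast_sub (show c + 1 ≤ a by omega), Nat.cast_sub (show c ≤ a by omega)]
  push_cast
  linear_combination (-(-1:ℝ)^c) * hr

theorem A_mul_P (n : ℕ) (A : Matrix (Fin (n + 1)) (Fin (n + 1)) ℝ)
    (hA : ∀ i j : Fin (n + 1), A i j =
      if i = j then -((n - (i : ℕ) : ℕ) : ℝ)
      else if (i : ℕ) = (j : ℕ) + 1 then ((n - (j : ℕ) : ℕ) : ℝ) else 0) :
    A * P n = P n * Matrix.diagonal (fun k : Fin (n + 1) => -((n - (k : ℕ) : ℕ) : ℝ)) := by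
  ext i m
  rw [Matrix.mul_apply, Matrix.mul_diagonal]
  rcases Nat.eq_zero_or_eq_succ_pred (i : ℕ) with hi0 | his
  · rw [Finset.sum_eq_single i]
    · rw [hA i i, if_pos rfl]
      rcases eq_or_ne m i with hm | hm
      · rw [hm]; ring
      · have hm' : ¬ ((m : ℕ) ≤ (i : ℕ)) := by
          have := Fin.val_ne_of_ne hm; omega
        show _ * (P n i m) = (P n i m) * _
        rw [show P n i m = 0 from if_neg hm']
        ring
    · intro j _ hj
      rw [hA i j, if_neg (fun he => hj he.symm), if_neg (by omega)]
      ring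
    · intro h; exact absurd (Finset.mem_univ i) h
  · set s := (i : ℕ) - 1 with hs
    have his' : (i : ℕ) = s + 1 := his
    have hsn : s < n := by omega
    set i' : Fin (n + 1) := ⟨s, by omega⟩ with hi'
    have hne : i ≠ i' := by
      intro he; have : (i : ℕ) = s := congrArg Fin.val he; omega
    have hsum : ∑ j : Fin (n + 1), A i j * P n j m =
        ∑ j ∈ ({i, i'} : Finset (Fin (n + 1))), A i j * P n j m := by
      symm
      apply Finset.sum_subset (Finset.subset_univ _)
      intro j _ hj
      simp only [Finset.mem_insert, Finset.mem_singleton] at hj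
      push_neg at hj
      rw [hA i j, if_neg (fun he => hj.1 he.symm), if_neg (by
        intro he
        apply hj.2
        apply Fin.ext
        simp only [hi']
        omega)]
      ring
    rw [hsum, Finset.sum_pair hne, hA i i, hA i i', if_pos rfl,
      if_neg hne, if_pos (by simp only [hi']; omega)]
    have hvi' : (i' : ℕ) = s := rfl
    rcases lt_trichotomy (i : ℕ) (m : ℕ) with hm | hm | hm
    · rw [show P n i m = 0 from if_neg (by omega),
        show P n i' m = 0 from if_neg (by rw [hvi']; omega)]
      ring
    · have hmi : m = i := Fin.ext hm.symm
      rw [hmi, show P n i i = 1 by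
          rw [show P n i i = if (i:ℕ) ≤ (i:ℕ) then _ else 0 from rfl, if_pos le_rfl]
          simp,
        show P n i' i = 0 from if_neg (by rw [hvi']; omega)]
      ring
    · have hms : (m : ℕ) ≤ s := by omega
      rw [show P n i m = (-1:ℝ)^((i:ℕ)-(m:ℕ)) * (Nat.choose (n - (m:ℕ)) ((i:ℕ)-(m:ℕ)) : ℝ) from
          if_pos (by omega),
        show P n i' m = (-1:ℝ)^(s-(m:ℕ)) * (Nat.choose (n - (m:ℕ)) (s-(m:ℕ)) : ℝ) from
          if_pos (by rw [hvi']; omega)]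
      have e1 : (i:ℕ) - (m:ℕ) = (s - (m:ℕ)) + 1 := by omega
      have e2 : n - (i:ℕ) = (n - (m:ℕ)) - ((s - (m:ℕ)) + 1) := by omega
      have e3 : n - s = (n - (m:ℕ)) - (s - (m:ℕ)) := by omega
      rw [hvi', e1, e2, e3]
      exact step (n - (m:ℕ)) (s - (m:ℕ)) (by omega)

theorem exp_reindex {m m' : Type*} [Fintype m] [DecidableEq m] [Fintype m'] [DecidableEq m']
    (e : m ≃ m') (M : Matrix m m ℝ) :
    exp (Matrix.reindex e e M) = Matrix.reindex e e (exp M) := by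
  letI : SeminormedRing (Matrix m m ℝ) := Matrix.linftyOpSemiNormedRing
  letI : NormedRing (Matrix m m ℝ) := Matrix.linftyOpNormedRing
  letI : NormedAlgebra ℝ (Matrix m m ℝ) := Matrix.linftyOpNormedAlgebra
  letI : SeminormedRing (Matrix m' m' ℝ) := Matrix.linftyOpSemiNormedRing
  letI : NormedRing (Matrix m' m' ℝ) := Matrix.linftyOpNormedRing
  letI : NormedAlgebra ℝ (Matrix m' m' ℝ) := Matrix.linftyOpNormedAlgebra
  letI : NormedAlgebra ℚ (Matrix m m ℝ) := Matrix.linftyOpNormedAlgebra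
  letI : NormedAlgebra ℚ (Matrix m' m' ℝ) := Matrix.linftyOpNormedAlgebra
  have hc : Continuous (Matrix.reindexAlgEquiv ℝ ℝ e) := by
    have : Continuous (Matrix.reindexAlgEquiv ℝ ℝ e).toLinearMap :=
      LinearMap.continuous_of_finiteDimensional _
    exact this
  have := map_exp (Matrix.reindexAlgEquiv ℝ ℝ e : Matrix m m ℝ ≃ₐ[ℝ] Matrix m' m' ℝ) hc M
  simp only [Matrix.reindexAlgEquiv_apply] at this
  exact this.symm

theorem middle (d n : ℕ) (Q : Matrix (Fin d) (Fin d) ℝ) (l : Fin d → ℝ) (t : ℝ) :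
    t • ((Matrix.diagonal (fun k : Fin (n + 1) => -((n - (k : ℕ) : ℕ) : ℝ))) ⊗ₖ Matrix.diagonal l
        + (1 : Matrix (Fin (n + 1)) (Fin (n + 1)) ℝ) ⊗ₖ Q)
    = Matrix.reindex (Equiv.prodComm (Fin d) (Fin (n + 1))) (Equiv.prodComm (Fin d) (Fin (n + 1)))
        (Matrix.blockDiagonal
          (fun k : Fin (n + 1) => t • (Q - ((n - (k : ℕ) : ℕ) : ℝ) • Matrix.diagonal l))) := by
  ext ⟨k, a⟩ ⟨k', b⟩
  simp only [Matrix.smul_apply, Matrix.add_apply, Matrix.kroneckerMap_apply,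
    Matrix.reindex_apply, Matrix.submatrix_apply, Equiv.prodComm_symm, Equiv.prodComm_apply,
    Prod.swap_prod_mk, Matrix.blockDiagonal_apply, Matrix.one_apply, Matrix.diagonal_apply,
    Matrix.sub_apply, smul_eq_mul]
  rcases eq_or_ne k k' with h | h
  · subst h
    rcases eq_or_ne a b with hab | hab
    · subst hab
      simp only [if_pos rfl, if_true]
      ring
    · simp only [if_neg hab, if_pos rfl, if_true]
      ring
  · simp only [if_neg h]
    ring

theorem conj_entry (d n : ℕ) (Pm Pim : Matrix (Fin (n + 1)) (Fin (n + 1)) ℝ)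
    (G : Fin (n + 1) → Matrix (Fin d) (Fin d) ℝ) (i j : Fin (n + 1)) (a b : Fin d) :
    ((Pm ⊗ₖ (1 : Matrix (Fin d) (Fin d) ℝ)) *
      (Matrix.reindex (Equiv.prodComm (Fin d) (Fin (n + 1))) (Equiv.prodComm (Fin d) (Fin (n + 1)))
        (Matrix.blockDiagonal G)) *
      (Pim ⊗ₖ (1 : Matrix (Fin d) (Fin d) ℝ))) (i, a) (j, b) =
    ∑ k : Fin (n + 1), Pm i k * Pim k j * G k a b := by
  simp only [Matrix.mul_apply, Fintype.sum_prod_type, Matrix.reindex_apply,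
    Matrix.submatrix_apply, Equiv.prodComm_symm, Equiv.prodComm_apply, Prod.swap,
    Matrix.blockDiagonal_apply, Matrix.kroneckerMap_apply, Matrix.one_apply]
  simp [Finset.mul_sum, Finset.sum_mul, mul_ite, ite_mul, mul_zero, zero_mul]
  apply Finset.sum_congr rfl
  intro k _
  ring

end Stmt5Aux

/-- Explicit formula for the `d×d` blocks of `exp(t𝐐)`, `𝐐 = A ⊗ diag(λ) + I ⊗ Q`. -/
theorem stmt_5 (d : ℕ) (hd : 1 ≤ d) (n : ℕ)
    (Q : Matrix (Fin d) (Fin d) ℝ) (l : Fin d → ℝ)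
    (A : Matrix (Fin (n + 1)) (Fin (n + 1)) ℝ)
    (hA : ∀ i j : Fin (n + 1), A i j =
      if i = j then -((n - (i : ℕ) : ℕ) : ℝ)
      else if (i : ℕ) = (j : ℕ) + 1 then ((n - (j : ℕ) : ℕ) : ℝ) else 0)
    (bQ : Matrix (Fin (n + 1) × Fin d) (Fin (n + 1) × Fin d) ℝ)
    (hbQ : bQ = A ⊗ₖ Matrix.diagonal l + (1 : Matrix (Fin (n + 1)) (Fin (n + 1)) ℝ) ⊗ₖ Q)
    (t : ℝ) (i j : Fin (n + 1)) :
    ((i : ℕ) < (j : ℕ) →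
      (Matrix.of fun a b : Fin d => exp (t • bQ) (i, a) (j, b)) = 0) ∧
    ((j : ℕ) ≤ (i : ℕ) →
      (Matrix.of fun a b : Fin d => exp (t • bQ) (i, a) (j, b)) =
        ((Nat.choose (n - j) (n - i) : ℝ)) •
          ∑ k ∈ Finset.Icc (j : ℕ) (i : ℕ),
            ((-1 : ℝ) ^ ((i : ℕ) - k) * (Nat.choose ((i : ℕ) - (j : ℕ)) ((i : ℕ) - k) : ℝ)) •
              exp (t • (Q - ((n - k : ℕ) : ℝ) • Matrix.diagonal l))) := by
  classical
  open Stmt5Aux Matrix in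
  -- notation
  set D : Matrix (Fin (n + 1)) (Fin (n + 1)) ℝ :=
    Matrix.diagonal (fun k : Fin (n + 1) => -((n - (k : ℕ) : ℕ) : ℝ)) with hD
  have hPPi : P n * Pi n = 1 := P_mul_Pi n
  have hPiP : Pi n * P n = 1 := mul_eq_one_comm.mp hPPi
  have hAP : A * P n = P n * D := A_mul_P n A hA
  have hAconj : A = P n * D * Pi n := by
    calc A = A * (P n * Pi n) := by rw [hPPi, Matrix.mul_one]
    _ = (A * P n) * Pi n := by rw [Matrix.mul_assoc]
    _ = P n * D * Pi n := by rw [hAP]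
  -- conjugation of bQ
  have hkron1 : (P n ⊗ₖ (1 : Matrix (Fin d) (Fin d) ℝ)) * ((Pi n) ⊗ₖ (1 : Matrix (Fin d) (Fin d) ℝ)) = 1 := by
    rw [← Matrix.mul_kronecker_mul, hPPi, Matrix.mul_one, Matrix.one_kronecker_one]
  have hkron2 : ((Pi n) ⊗ₖ (1 : Matrix (Fin d) (Fin d) ℝ)) * (P n ⊗ₖ (1 : Matrix (Fin d) (Fin d) ℝ)) = 1 := by
    rw [← Matrix.mul_kronecker_mul, hPiP, Matrix.mul_one, Matrix.one_kronecker_one]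
  set N : Matrix (Fin (n + 1) × Fin d) (Fin (n + 1) × Fin d) ℝ :=
    D ⊗ₖ Matrix.diagonal l + (1 : Matrix (Fin (n + 1)) (Fin (n + 1)) ℝ) ⊗ₖ Q with hN
  have hbQconj : bQ = (P n ⊗ₖ (1 : Matrix (Fin d) (Fin d) ℝ)) * N *
      ((Pi n) ⊗ₖ (1 : Matrix (Fin d) (Fin d) ℝ)) := by
    rw [hbQ, hN, Matrix.mul_add, Matrix.add_mul]
    congr 1
    · rw [← Matrix.mul_kronecker_mul, ← Matrix.mul_kronecker_mul, Matrix.mul_one,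
        Matrix.one_mul, ← hAconj]
    · simp [← Matrix.mul_kronecker_mul, hPPi]
  set U : (Matrix (Fin (n + 1) × Fin d) (Fin (n + 1) × Fin d) ℝ)ˣ :=
    ⟨P n ⊗ₖ (1 : Matrix (Fin d) (Fin d) ℝ), (Pi n) ⊗ₖ (1 : Matrix (Fin d) (Fin d) ℝ),
      hkron1, hkron2⟩ with hU
  have hsmul : t • bQ = (U : Matrix (Fin (n + 1) × Fin d) (Fin (n + 1) × Fin d) ℝ) * (t • N) *
      ((U⁻¹ : (Matrix (Fin (n + 1) × Fin d) (Fin (n + 1) × Fin d) ℝ)ˣ) :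
        Matrix (Fin (n + 1) × Fin d) (Fin (n + 1) × Fin d) ℝ) := by
    show t • bQ = (P n ⊗ₖ (1 : Matrix (Fin d) (Fin d) ℝ)) * (t • N) *
      ((Pi n) ⊗ₖ (1 : Matrix (Fin d) (Fin d) ℝ))
    rw [hbQconj, Matrix.mul_smul, Matrix.smul_mul]
  have hexp : exp (t • bQ) =
      (P n ⊗ₖ (1 : Matrix (Fin d) (Fin d) ℝ)) * exp (t • N) *
        ((Pi n) ⊗ₖ (1 : Matrix (Fin d) (Fin d) ℝ)) := by
    rw [hsmul]
    exact Matrix.exp_units_conj U (t • N)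
  set E : Fin (n + 1) → Matrix (Fin d) (Fin d) ℝ :=
    fun k => exp (t • (Q - ((n - (k : ℕ) : ℕ) : ℝ) • Matrix.diagonal l)) with hE
  have hexpN : exp (t • N) =
      Matrix.reindex (Equiv.prodComm (Fin d) (Fin (n + 1))) (Equiv.prodComm (Fin d) (Fin (n + 1)))
        (Matrix.blockDiagonal E) := by
    rw [hN, middle d n Q l t, exp_reindex, Matrix.exp_blockDiagonal]
    have hpi : (exp fun k : Fin (n + 1) =>
        t • (Q - ((n - (k : ℕ) : ℕ) : ℝ) • Matrix.diagonal l)) = E := by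
      letI : SeminormedRing (Matrix (Fin d) (Fin d) ℝ) := Matrix.linftyOpSemiNormedRing
      letI : NormedRing (Matrix (Fin d) (Fin d) ℝ) := Matrix.linftyOpNormedRing
      letI : NormedAlgebra ℝ (Matrix (Fin d) (Fin d) ℝ) := Matrix.linftyOpNormedAlgebra
      letI : NormedAlgebra ℚ (Matrix (Fin d) (Fin d) ℝ) := Matrix.linftyOpNormedAlgebra
      exact Pi.exp_def _
    rw [hpi]
  have hentry : ∀ a b : Fin d, exp (t • bQ) (i, a) (j, b) =
      ∑ k : Fin (n + 1), P n i k * Pi n k j * E k a b := by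
    intro a b
    rw [hexp, hexpN]
    exact conj_entry d n (P n) (Pi n) E i j a b
  constructor
  · intro hij
    ext a b
    simp only [Matrix.of_apply, Matrix.zero_apply]
    rw [hentry a b]
    apply Finset.sum_eq_zero
    intro k _
    rcases le_or_gt (k : ℕ) (i : ℕ) with hk | hk
    · rw [show Pi n k j = 0 from if_neg (by omega)]; ring
    · rw [show P n i k = 0 from if_neg (by omega)]; ring
  · intro hji
    ext a b
    simp only [Matrix.of_apply, Matrix.smul_apply, Matrix.sum_apply, smul_eq_mul]
    rw [hentry a b]
    have h0 : (∑ k : Fin (n + 1), P n i k * Pi n k j * E k a b) =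
        ∑ k ∈ Finset.Icc (j : ℕ) (i : ℕ), (fun k : ℕ => (if k ≤ (i : ℕ) then
          (-1 : ℝ) ^ ((i : ℕ) - k) * (Nat.choose (n - k) ((i : ℕ) - k) : ℝ) else 0) *
          (if (j : ℕ) ≤ k then (Nat.choose (n - (j : ℕ)) (k - (j : ℕ)) : ℝ) else 0) *
          (exp (t • (Q - ((n - k : ℕ) : ℝ) • Matrix.diagonal l))) a b) k :=
      sum_fin_icc n i j (fun k : ℕ => (if k ≤ (i : ℕ) then
          (-1 : ℝ) ^ ((i : ℕ) - k) * (Nat.choose (n - k) ((i : ℕ) - k) : ℝ) else 0) *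
          (if (j : ℕ) ≤ k then (Nat.choose (n - (j : ℕ)) (k - (j : ℕ)) : ℝ) else 0) *
          (exp (t • (Q - ((n - k : ℕ) : ℝ) • Matrix.diagonal l))) a b)
        (by intro k hk hcase
            beta_reduce
            rcases hcase with h | h
            · rw [if_neg (show ¬ (j : ℕ) ≤ k by omega)]; ring
            · rw [if_neg (show ¬ k ≤ (i : ℕ) by omega)]; ring)
    rw [h0]
    rw [Finset.mul_sum]
    apply Finset.sum_congr rfl
    intro k hk
    simp only [Finset.mem_Icc] at hk
    beta_reduce
    rw [if_pos hk.2, if_pos hk.1]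
    have hc : ((Nat.choose (n - k) ((i : ℕ) - k) : ℝ)) * (Nat.choose (n - (j : ℕ)) (k - (j : ℕ)) : ℝ)
        = (Nat.choose (n - (j : ℕ)) (n - (i : ℕ)) : ℝ) *
          (Nat.choose ((i : ℕ) - (j : ℕ)) ((i : ℕ) - k) : ℝ) := by
      exact_mod_cast congrArg (Nat.cast : ℕ → ℝ)
        (choose_key (n := n) (i := i) (j := j) (k := k) hk.1 hk.2 (by omega))
    linear_combination ((-1:ℝ) ^ ((i : ℕ) - k) *
      (exp (t • (Q - ((n - k : ℕ) : ℝ) • Matrix.diagonal l)) a b)) * hc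
end

section
/- Let Q be a real d×d matrix, λ ∈ ℝ^d, n ∈ ℕ. Let A be the (n+1)×(n+1) matrix with A_{ii} = −(n−i), A_{i+1,i} = n−i, other entries zero, and let 𝐐 = A ⊗ diag(λ) + I_{n+1} ⊗ Q. Then for every s ∈ ℝ, every x ∈ ℝ^d and all indices 0 ≤ j ≤ k ≤ n, (e_kᵀ ⊗ I_d) · exp(s𝐐) · (e_j ⊗ x) = C(n−j, k−j) · ∑_{i=j}^{k} (−1)^{k−i} C(k−j, k−i) · exp(s(Q − (n−i)·diag(λ))) · x, while for k < j the left-hand side is the zero vector. -/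
open Kronecker NormedSpace Matrix Finset

noncomputable def stmt8V (n : ℕ) : Matrix (Fin (n + 1)) (Fin (n + 1)) ℝ :=
  fun r i => if (i : ℕ) ≤ (r : ℕ) then
    (-1 : ℝ) ^ ((r : ℕ) - (i : ℕ)) * ((n - (i : ℕ)).choose ((r : ℕ) - (i : ℕ)) : ℝ) else 0

noncomputable def stmt8W (n : ℕ) : Matrix (Fin (n + 1)) (Fin (n + 1)) ℝ :=
  fun i j => if (j : ℕ) ≤ (i : ℕ) then ((n - (j : ℕ)).choose ((i : ℕ) - (j : ℕ)) : ℝ) else 0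

lemma stmt8_choose_trick {s k n : ℕ} (hsk : s ≤ k) (hkn : k ≤ n) :
    n.choose k * k.choose s = n.choose s * (n - s).choose (k - s) := by
  have e1 : k.choose s * s.factorial * (k - s).factorial = k.factorial :=
    Nat.choose_mul_factorial_mul_factorial hsk
  have e2 : n.choose k * k.factorial * (n - k).factorial = n.factorial :=
    Nat.choose_mul_factorial_mul_factorial hkn
  have e3 : n.choose s * s.factorial * (n - s).factorial = n.factorial :=
    Nat.choose_mul_factorial_mul_factorial (hsk.trans hkn)
  have e4 : (n - s).choose (k - s) * (k - s).factorial * (n - k).factorial = (n - s).factorial := by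
    have := Nat.choose_mul_factorial_mul_factorial (Nat.sub_le_sub_right hkn s)
    have h5 : n - s - (k - s) = n - k := by omega
    rwa [h5] at this
  have hpos : 0 < s.factorial * ((k - s).factorial * (n - k).factorial) :=
    Nat.mul_pos s.factorial_pos (Nat.mul_pos (Nat.factorial_pos _) (Nat.factorial_pos _))
  apply Nat.eq_of_mul_eq_mul_right hpos
  calc n.choose k * k.choose s * (s.factorial * ((k - s).factorial * (n - k).factorial))
      = n.choose k * (k.choose s * s.factorial * (k - s).factorial) * (n - k).factorial := by ring
    _ = n.factorial := by rw [e1, e2]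
    _ = n.choose s * s.factorial * (n - s).factorial := e3.symm
    _ = n.choose s * s.factorial * ((n - s).choose (k - s) * (k - s).factorial * (n - k).factorial) := by rw [e4]
    _ = n.choose s * (n - s).choose (k - s) * (s.factorial * ((k - s).factorial * (n - k).factorial)) := by ring

lemma stmt8_alt_sum {M : ℕ} (hM : M ≠ 0) :
    ∑ m ∈ range (M + 1), (-1 : ℝ) ^ m * (M.choose m : ℝ) = 0 := by
  have h := Int.alternating_sum_range_choose (n := M)
  rw [if_neg hM] at h
  have := congrArg (fun z : ℤ => (z : ℝ)) h
  push_cast at this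
  simpa using this

lemma stmt8_VW (n : ℕ) : stmt8V n * stmt8W n = 1 := by
  ext r j
  rw [Matrix.mul_apply]
  have step : (∑ i : Fin (n + 1), stmt8V n r i * stmt8W n i j) =
      ∑ c ∈ range (n + 1), ((if c ≤ (r : ℕ) then
          (-1 : ℝ) ^ ((r : ℕ) - c) * ((n - c).choose ((r : ℕ) - c) : ℝ) else 0) *
        (if (j : ℕ) ≤ c then ((n - (j : ℕ)).choose (c - (j : ℕ)) : ℝ) else 0)) :=
    Fin.sum_univ_eq_sum_range (fun c => (if c ≤ (r : ℕ) then
          (-1 : ℝ) ^ ((r : ℕ) - c) * ((n - c).choose ((r : ℕ) - c) : ℝ) else 0) *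
        (if (j : ℕ) ≤ c then ((n - (j : ℕ)).choose (c - (j : ℕ)) : ℝ) else 0)) (n + 1)
  rw [step]
  rw [← Finset.sum_subset (show Finset.Icc (j : ℕ) (r : ℕ) ⊆ range (n + 1) by
        intro c hc; rw [Finset.mem_Icc] at hc; rw [Finset.mem_range]; omega)]
  swap
  · intro c _ hc
    rw [Finset.mem_Icc] at hc
    push_neg at hc
    by_cases h1 : (j : ℕ) ≤ c
    · rw [if_neg (by omega)]; ring
    · rw [if_neg h1]; ring
  -- now sum over Icc j r
  by_cases hrj : (j : ℕ) ≤ (r : ℕ)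
  swap
  · rw [show Finset.Icc (j : ℕ) (r : ℕ) = ∅ by rw [Finset.Icc_eq_empty]; omega]
    rw [Finset.sum_empty, Matrix.one_apply_ne (by intro h; rw [h] at hrj; omega)]
  · -- rewrite terms
    have hterm : ∀ c ∈ Finset.Icc (j : ℕ) (r : ℕ),
        ((if c ≤ (r : ℕ) then
            (-1 : ℝ) ^ ((r : ℕ) - c) * ((n - c).choose ((r : ℕ) - c) : ℝ) else 0) *
          (if (j : ℕ) ≤ c then ((n - (j : ℕ)).choose (c - (j : ℕ)) : ℝ) else 0)) =
        ((n - (j : ℕ)).choose ((r : ℕ) - (j : ℕ)) : ℝ) *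
          ((-1 : ℝ) ^ ((r : ℕ) - c) * (((r : ℕ) - (j : ℕ)).choose (c - (j : ℕ)) : ℝ)) := by
      intro c hc
      rw [Finset.mem_Icc] at hc
      rw [if_pos hc.2, if_pos hc.1]
      have key := stmt8_choose_trick (s := c - (j : ℕ)) (k := (r : ℕ) - (j : ℕ)) (n := n - (j : ℕ))
        (by omega) (by omega)
      rw [show n - (j : ℕ) - (c - (j : ℕ)) = n - c by omega,
          show (r : ℕ) - (j : ℕ) - (c - (j : ℕ)) = (r : ℕ) - c by omega] at key
      have keyR : (((n - (j:ℕ)).choose ((r:ℕ) - (j:ℕ)) : ℝ) * (((r:ℕ) - (j:ℕ)).choose (c - (j:ℕ)) : ℝ)) =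
          (((n - (j:ℕ)).choose (c - (j:ℕ)) : ℝ) * ((n - c).choose ((r:ℕ) - c) : ℝ)) := by
        exact_mod_cast congrArg (fun t : ℕ => (t : ℝ)) key
      linear_combination ((-1 : ℝ) ^ ((r : ℕ) - c)) * keyR.symm
    rw [Finset.sum_congr rfl hterm]
    rw [← Finset.mul_sum]
    by_cases hrj2 : (r : ℕ) = (j : ℕ)
    · have hrj3 : r = j := Fin.ext hrj2
      rw [show Finset.Icc (j : ℕ) (r : ℕ) = {(j : ℕ)} by rw [hrj2, Finset.Icc_self]]
      rw [Finset.sum_singleton, hrj3, Matrix.one_apply_eq]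
      simp
    · have hone : (1 : Matrix (Fin (n+1)) (Fin (n+1)) ℝ) r j = 0 :=
        Matrix.one_apply_ne (by intro h; rw [h] at hrj2; omega)
      rw [hone]
      have hsum : ∑ c ∈ Finset.Icc (j : ℕ) (r : ℕ),
          ((-1 : ℝ) ^ ((r : ℕ) - c) * (((r : ℕ) - (j : ℕ)).choose (c - (j : ℕ)) : ℝ)) = 0 := by
        rw [← Finset.Ico_add_one_right_eq_Icc]
        rw [Finset.sum_Ico_eq_sum_range]
        set M := (r : ℕ) - (j : ℕ) with hM
        have hM1 : (r : ℕ) + 1 - (j : ℕ) = M + 1 := by omega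
        rw [hM1]
        have : ∀ m ∈ range (M + 1),
            ((-1 : ℝ) ^ ((r : ℕ) - ((j : ℕ) + m)) * ((M.choose (((j : ℕ) + m) - (j : ℕ))) : ℝ)) =
            (-1 : ℝ) ^ (M + 1 - 1 - m) * (M.choose (M - (M + 1 - 1 - m)) : ℝ) := by
          intro m hm
          rw [Finset.mem_range] at hm
          rw [show (r : ℕ) - ((j : ℕ) + m) = M + 1 - 1 - m by omega,
              show ((j : ℕ) + m) - (j : ℕ) = m by omega,
              show M - (M + 1 - 1 - m) = m by omega]
        rw [Finset.sum_congr rfl this,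
          Finset.sum_range_reflect (fun t => (-1 : ℝ) ^ t * (M.choose (M - t) : ℝ)) (M + 1)]
        have : ∀ m ∈ range (M + 1), (-1 : ℝ) ^ m * (M.choose (M - m) : ℝ) =
            (-1 : ℝ) ^ m * (M.choose m : ℝ) := by
          intro m hm
          rw [Finset.mem_range] at hm
          rw [Nat.choose_symm (by omega)]
        rw [Finset.sum_congr rfl this]
        exact stmt8_alt_sum (by omega)
      rw [hsum, mul_zero]

lemma stmt8_AV (n : ℕ) (A : Matrix (Fin (n + 1)) (Fin (n + 1)) ℝ)
    (hA : ∀ i j : Fin (n + 1), A i j =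
      if i = j then -((n - (i : ℕ) : ℕ) : ℝ)
      else if (i : ℕ) = (j : ℕ) + 1 then ((n - (j : ℕ) : ℕ) : ℝ) else 0) :
    A * stmt8V n = stmt8V n * Matrix.diagonal (fun i : Fin (n + 1) => -((n - (i : ℕ) : ℕ) : ℝ)) := by
  ext r i
  rw [Matrix.mul_apply, Matrix.mul_diagonal]
  have split : (∑ c, A r c * stmt8V n c i) =
      (∑ c, if c = r then -((n - (r : ℕ) : ℕ) : ℝ) * stmt8V n c i else 0)
      + (∑ c : Fin (n + 1), if (r : ℕ) = (c : ℕ) + 1 then ((n - (c : ℕ) : ℕ) : ℝ) * stmt8V n c i else 0) := by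
    rw [← Finset.sum_add_distrib]
    refine Finset.sum_congr rfl fun c _ => ?_
    rw [hA]
    rcases eq_or_ne r c with h | h
    · subst h
      rw [if_pos rfl, if_pos rfl, if_neg (by omega), add_zero]
    · rw [if_neg h, if_neg (show ¬ c = r from fun hh => h hh.symm), zero_add]
      split_ifs <;> ring
  rw [split, Finset.sum_ite_eq' Finset.univ r
      (fun c => -((n - (r : ℕ) : ℕ) : ℝ) * stmt8V n c i), if_pos (Finset.mem_univ r)]
  by_cases hr0 : (r : ℕ) = 0
  · rw [Finset.sum_eq_zero (fun c _ => by rw [if_neg (by omega)]), add_zero]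
    -- r = 0 case
    unfold stmt8V
    rcases Nat.eq_zero_or_pos (i : ℕ) with hi | hi
    · rw [if_pos (by omega), show n - (i : ℕ) = n - (r : ℕ) by omega]
      ring
    · rw [if_neg (by omega)]; ring
  · -- r ≥ 1
    have hcond : ∀ c : Fin (n + 1), ((r : ℕ) = (c : ℕ) + 1) ↔ c = (⟨(r : ℕ) - 1, by omega⟩ : Fin (n + 1)) := by
      intro c
      rw [Fin.ext_iff]
      simp only []
      omega
    rw [Finset.sum_congr rfl (fun c _ => by rw [if_congr (hcond c) rfl rfl]),
        Finset.sum_ite_eq' Finset.univ _ (fun c : Fin (n + 1) => ((n - (c : ℕ) : ℕ) : ℝ) * stmt8V n c i),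
        if_pos (Finset.mem_univ _)]
    unfold stmt8V
    simp only [Fin.val_mk]
    rcases lt_trichotomy ((r : ℕ)) ((i : ℕ)) with hri | hri | hri
    · rw [if_neg (by omega), if_neg (by omega)]; ring
    · rw [if_pos (by omega), if_neg (by omega), show n - (i : ℕ) = n - (r : ℕ) by omega]
      ring
    · -- r > i
      rw [if_pos (by omega), if_pos (by omega)]
      have hrn : (r : ℕ) ≤ n := by omega
      set m1 : ℕ := (r : ℕ) - 1 - (i : ℕ) with hm1
      rw [show (r : ℕ) - (i : ℕ) = m1 + 1 from by omega]
      rw [show n - ((r : ℕ) - 1) = (n - (r : ℕ)) + 1 from by omega]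
      rw [pow_succ]
      have hk := Nat.choose_succ_right_eq (n - (i : ℕ)) m1
      rw [show n - (i : ℕ) - m1 = (n - (r : ℕ)) + 1 from by omega] at hk
      have hkR : ((n - (i : ℕ)).choose (m1 + 1) : ℝ) * ((m1 : ℝ) + 1) =
          ((n - (i : ℕ)).choose m1 : ℝ) * (((n - (r : ℕ) : ℕ) : ℝ) + 1) := by
        exact_mod_cast hk
      have hni : ((n - (i : ℕ) : ℕ) : ℝ) = ((n - (r : ℕ) : ℕ) : ℝ) + (m1 : ℝ) + 1 := by
        have h9 : n - (i : ℕ) = (n - (r : ℕ)) + m1 + 1 := by omega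
        rw [h9]; push_cast; ring
      rw [hni]
      push_cast
      linear_combination (-((-1 : ℝ) ^ m1)) * hkR

lemma stmt8_exp_reindex {m n : Type*} [Fintype m] [DecidableEq m] [Fintype n] [DecidableEq n]
    (e : m ≃ n) (M : Matrix m m ℝ) :
    NormedSpace.exp ((reindexAlgEquiv ℝ ℝ e) M) = (reindexAlgEquiv ℝ ℝ e) (NormedSpace.exp M) := by
  letI : SeminormedRing (Matrix m m ℝ) := Matrix.linftyOpSemiNormedRing
  letI : NormedRing (Matrix m m ℝ) := Matrix.linftyOpNormedRing
  letI : NormedAlgebra ℝ (Matrix m m ℝ) := Matrix.linftyOpNormedAlgebra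
  letI : SeminormedRing (Matrix n n ℝ) := Matrix.linftyOpSemiNormedRing
  letI : NormedRing (Matrix n n ℝ) := Matrix.linftyOpNormedRing
  letI : NormedAlgebra ℝ (Matrix n n ℝ) := Matrix.linftyOpNormedAlgebra
  letI : NormedAlgebra ℚ (Matrix m m ℝ) := NormedAlgebra.restrictScalars ℚ ℝ _
  have hcont : Continuous (reindexAlgEquiv ℝ ℝ e) := by
    show Continuous fun M : Matrix m m ℝ => reindex e e M
    simp only [reindex_apply]
    exact continuous_id.matrix_submatrix _ _
  exact (map_exp (reindexAlgEquiv ℝ ℝ e) hcont M).symm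

/-- Blockwise action of `exp(s𝐐)` on `e_j ⊗ x`: explicit conditional-probability formula. -/
theorem stmt_8 (d : ℕ) (hd : 1 ≤ d) (n : ℕ)
    (Q : Matrix (Fin d) (Fin d) ℝ) (l : Fin d → ℝ)
    (A : Matrix (Fin (n + 1)) (Fin (n + 1)) ℝ)
    (hA : ∀ i j : Fin (n + 1), A i j =
      if i = j then -((n - (i : ℕ) : ℕ) : ℝ)
      else if (i : ℕ) = (j : ℕ) + 1 then ((n - (j : ℕ) : ℕ) : ℝ) else 0)
    (bQ : Matrix (Fin (n + 1) × Fin d) (Fin (n + 1) × Fin d) ℝ)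
    (hbQ : bQ = A ⊗ₖ Matrix.diagonal l + (1 : Matrix (Fin (n + 1)) (Fin (n + 1)) ℝ) ⊗ₖ Q)
    (s : ℝ) (x : Fin d → ℝ) (j k : Fin (n + 1))
    (v : Fin (n + 1) × Fin d → ℝ)
    (hv : v = fun p => if p.1 = j then x p.2 else 0) :
    ((j : ℕ) ≤ (k : ℕ) →
      (fun a : Fin d => (NormedSpace.exp (s • bQ) *ᵥ v) (k, a)) =
        ((Nat.choose (n - j) ((k : ℕ) - (j : ℕ)) : ℝ)) •
          ∑ i ∈ Finset.Icc (j : ℕ) (k : ℕ),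
            ((-1 : ℝ) ^ ((k : ℕ) - i) * (Nat.choose ((k : ℕ) - (j : ℕ)) ((k : ℕ) - i) : ℝ)) •
              (NormedSpace.exp (s • (Q - ((n - i : ℕ) : ℝ) • Matrix.diagonal l)) *ᵥ x)) ∧
    ((k : ℕ) < (j : ℕ) →
      (fun a : Fin d => (NormedSpace.exp (s • bQ) *ᵥ v) (k, a)) = 0) := by
  classical
  have hVW : stmt8V n * stmt8W n = 1 := stmt8_VW n
  have hWV : stmt8W n * stmt8V n = 1 := mul_eq_one_comm.mp hVW
  set bV : Matrix (Fin (n + 1) × Fin d) (Fin (n + 1) × Fin d) ℝ :=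
    stmt8V n ⊗ₖ (1 : Matrix (Fin d) (Fin d) ℝ) with hbV
  set bW : Matrix (Fin (n + 1) × Fin d) (Fin (n + 1) × Fin d) ℝ :=
    stmt8W n ⊗ₖ (1 : Matrix (Fin d) (Fin d) ℝ) with hbW
  set M : Matrix (Fin (n + 1) × Fin d) (Fin (n + 1) × Fin d) ℝ :=
    Matrix.diagonal (fun i : Fin (n + 1) => -((n - (i : ℕ) : ℕ) : ℝ)) ⊗ₖ Matrix.diagonal l
      + (1 : Matrix (Fin (n + 1)) (Fin (n + 1)) ℝ) ⊗ₖ Q with hM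
  have hbVW : bV * bW = 1 := by
    rw [hbV, hbW, ← Matrix.mul_kronecker_mul, hVW, Matrix.one_mul, Matrix.one_kronecker_one]
  have hbWV : bW * bV = 1 := by
    rw [hbV, hbW, ← Matrix.mul_kronecker_mul, hWV, Matrix.one_mul, Matrix.one_kronecker_one]
  have hconj : bQ * bV = bV * M := by
    rw [hbQ, hbV, hM, add_mul, mul_add, ← Matrix.mul_kronecker_mul, ← Matrix.mul_kronecker_mul,
        ← Matrix.mul_kronecker_mul, ← Matrix.mul_kronecker_mul, Matrix.mul_one, Matrix.mul_one,
        Matrix.one_mul, Matrix.one_mul, stmt8_AV n A hA, Matrix.mul_one, Matrix.one_mul]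
  have hfact : s • bQ = bV * (s • M) * bW := by
    have h1 : bQ = bV * M * bW := by
      calc bQ = bQ * (bV * bW) := by rw [hbVW, Matrix.mul_one]
        _ = bQ * bV * bW := by rw [Matrix.mul_assoc]
        _ = bV * M * bW := by rw [hconj]
    rw [h1, Matrix.mul_smul, Matrix.smul_mul]
  have hexp1 : NormedSpace.exp (s • bQ) = bV * NormedSpace.exp (s • M) * bW := by
    rw [hfact]
    exact Matrix.exp_units_conj ⟨bV, bW, hbVW, hbWV⟩ (s • M)
  have hsM : s • M = (Matrix.reindexAlgEquiv ℝ ℝ (Equiv.prodComm (Fin d) (Fin (n + 1))))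
      (Matrix.blockDiagonal (fun i : Fin (n + 1) =>
        s • (Q - ((n - (i : ℕ) : ℕ) : ℝ) • Matrix.diagonal l))) := by
    rw [Matrix.reindexAlgEquiv_apply]
    ext ⟨i, a⟩ ⟨i', b⟩
    rw [Matrix.reindex_apply, Matrix.submatrix_apply, hM]
    rcases eq_or_ne i i' with h | h
    · subst h
      simp only [Matrix.smul_apply, Matrix.add_apply, Matrix.kroneckerMap_apply,
        Matrix.diagonal_apply_eq, Matrix.one_apply_eq, Equiv.prodComm_symm, Equiv.prodComm_apply,
        Prod.swap_prod_mk, Matrix.blockDiagonal_apply, if_pos rfl, Matrix.sub_apply, smul_eq_mul]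
      rw [if_pos trivial]
      ring
    · simp only [Matrix.smul_apply, Matrix.add_apply, Matrix.kroneckerMap_apply,
        Matrix.diagonal_apply_ne _ h, Matrix.one_apply_ne h, Equiv.prodComm_symm,
        Equiv.prodComm_apply, Prod.swap_prod_mk, Matrix.blockDiagonal_apply, if_neg h,
        smul_eq_mul, mul_zero, zero_mul, add_zero]
  have hexpM : ∀ (i i' : Fin (n + 1)) (a b : Fin d),
      NormedSpace.exp (s • M) (i, a) (i', b) =
        if i = i' then (NormedSpace.exp (s • (Q - ((n - (i : ℕ) : ℕ) : ℝ) • Matrix.diagonal l))) a b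
        else 0 := by
    intro i i' a b
    rw [hsM, stmt8_exp_reindex, Matrix.exp_blockDiagonal, Matrix.reindexAlgEquiv_apply,
      Matrix.reindex_apply, Matrix.submatrix_apply]
    rw [show (Equiv.prodComm (Fin d) (Fin (n + 1))).symm (i, a) = (a, i) from rfl,
        show (Equiv.prodComm (Fin d) (Fin (n + 1))).symm (i', b) = (b, i') from rfl]
    rw [Matrix.blockDiagonal_apply]
    rcases eq_or_ne i i' with h | h
    · subst h
      rw [if_pos rfl, if_pos rfl]
      letI : SeminormedRing (Matrix (Fin d) (Fin d) ℝ) := Matrix.linftyOpSemiNormedRing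
      letI : NormedRing (Matrix (Fin d) (Fin d) ℝ) := Matrix.linftyOpNormedRing
      letI : NormedAlgebra ℝ (Matrix (Fin d) (Fin d) ℝ) := Matrix.linftyOpNormedAlgebra
      letI : NormedAlgebra ℚ (Matrix (Fin d) (Fin d) ℝ) := NormedAlgebra.restrictScalars ℚ ℝ _
      exact congrArg (fun N => N a b) (Pi.coe_exp (fun i : Fin (n + 1) =>
        s • (Q - ((n - (i : ℕ) : ℕ) : ℝ) • Matrix.diagonal l)) i)
    · rw [if_neg h, if_neg h]
  have h1 : bW *ᵥ v = fun p => stmt8W n p.1 j * x p.2 := by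
    funext p
    obtain ⟨i, b⟩ := p
    rw [hv, hbW]
    simp only [Matrix.mulVec, dotProduct]
    rw [Fintype.sum_prod_type]
    simp [Matrix.kroneckerMap_apply, Matrix.one_apply, mul_ite, ite_mul, mul_zero, zero_mul,
      mul_one, Finset.sum_ite_eq, Finset.sum_ite_eq', Finset.mem_univ]
  have h2 : NormedSpace.exp (s • M) *ᵥ (bW *ᵥ v) = fun p => stmt8W n p.1 j *
      (NormedSpace.exp (s • (Q - ((n - (p.1 : ℕ) : ℕ) : ℝ) • Matrix.diagonal l)) *ᵥ x) p.2 := by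
    funext p
    obtain ⟨i, b⟩ := p
    rw [h1]
    simp only [Matrix.mulVec, dotProduct]
    rw [Fintype.sum_prod_type]
    simp only [hexpM, ite_mul, zero_mul]
    rw [Finset.sum_eq_single_of_mem i (Finset.mem_univ i)
      (fun i' _ hne => Finset.sum_eq_zero fun c _ => by rw [if_neg (Ne.symm hne)])]
    rw [Finset.mul_sum]
    exact Finset.sum_congr rfl fun c _ => by rw [if_pos rfl]; ring
  have hfinal : (fun a : Fin d => (NormedSpace.exp (s • bQ) *ᵥ v) (k, a)) =
      ∑ i : Fin (n + 1), (stmt8V n k i * stmt8W n i j) •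
        (NormedSpace.exp (s • (Q - ((n - (i : ℕ) : ℕ) : ℝ) • Matrix.diagonal l)) *ᵥ x) := by
    funext a
    rw [hexp1, ← Matrix.mulVec_mulVec, ← Matrix.mulVec_mulVec, h2, hbV]
    rw [show ((kroneckerMap (fun x1 x2 => x1 * x2) (stmt8V n)
        (1 : Matrix (Fin d) (Fin d) ℝ)) *ᵥ (fun p => stmt8W n p.1 j *
        (NormedSpace.exp (s • (Q - ((n - (p.1 : ℕ) : ℕ) : ℝ) • Matrix.diagonal l)) *ᵥ x) p.2)) (k, a)
        = ∑ q : Fin (n + 1) × Fin d, stmt8V n k q.1 * (1 : Matrix (Fin d) (Fin d) ℝ) a q.2 *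
          (stmt8W n q.1 j * (NormedSpace.exp (s • (Q - ((n - (q.1 : ℕ) : ℕ) : ℝ) • Matrix.diagonal l)) *ᵥ x) q.2)
      from rfl]
    rw [Fintype.sum_prod_type]
    rw [Finset.sum_apply]
    refine Finset.sum_congr rfl fun i _ => ?_
    rw [Pi.smul_apply, smul_eq_mul]
    simp only [Matrix.one_apply, mul_ite, ite_mul, mul_one, mul_zero, zero_mul]
    rw [Finset.sum_ite_eq Finset.univ a, if_pos (Finset.mem_univ a)]
    ring
  constructor
  · intro hjk
    rw [hfinal]
    have step1 : (∑ i : Fin (n + 1), (stmt8V n k i * stmt8W n i j) •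
        (NormedSpace.exp (s • (Q - ((n - (i : ℕ) : ℕ) : ℝ) • Matrix.diagonal l)) *ᵥ x)) =
        ∑ c ∈ Finset.range (n + 1),
          ((if c ≤ (k : ℕ) then
              (-1 : ℝ) ^ ((k : ℕ) - c) * ((n - c).choose ((k : ℕ) - c) : ℝ) else 0) *
            (if (j : ℕ) ≤ c then ((n - (j : ℕ)).choose (c - (j : ℕ)) : ℝ) else 0)) •
          (NormedSpace.exp (s • (Q - ((n - c : ℕ) : ℝ) • Matrix.diagonal l)) *ᵥ x) :=
      Fin.sum_univ_eq_sum_range (fun c =>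
        ((if c ≤ (k : ℕ) then
            (-1 : ℝ) ^ ((k : ℕ) - c) * ((n - c).choose ((k : ℕ) - c) : ℝ) else 0) *
          (if (j : ℕ) ≤ c then ((n - (j : ℕ)).choose (c - (j : ℕ)) : ℝ) else 0)) •
        (NormedSpace.exp (s • (Q - ((n - c : ℕ) : ℝ) • Matrix.diagonal l)) *ᵥ x)) (n + 1)
    rw [step1, ← Finset.sum_subset (show Finset.Icc (j : ℕ) (k : ℕ) ⊆ Finset.range (n + 1) by
        intro c hc; rw [Finset.mem_Icc] at hc; rw [Finset.mem_range]; omega)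
      (fun c _ hc => by
        rw [Finset.mem_Icc] at hc
        push_neg at hc
        by_cases h1 : (j : ℕ) ≤ c
        · rw [if_neg (by omega), zero_mul, zero_smul]
        · rw [if_neg h1, mul_zero, zero_smul])]
    rw [Finset.smul_sum]
    refine Finset.sum_congr rfl fun c hc => ?_
    rw [Finset.mem_Icc] at hc
    rw [if_pos hc.2, if_pos hc.1, smul_smul]
    congr 1
    have key := stmt8_choose_trick (show c - (j : ℕ) ≤ (k : ℕ) - (j : ℕ) by omega)
      (show (k : ℕ) - (j : ℕ) ≤ n - (j : ℕ) by omega)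
    rw [show n - (j : ℕ) - (c - (j : ℕ)) = n - c by omega,
        show (k : ℕ) - (j : ℕ) - (c - (j : ℕ)) = (k : ℕ) - c by omega,
        show ((k : ℕ) - (j : ℕ)).choose (c - (j : ℕ))
            = ((k : ℕ) - (j : ℕ)).choose ((k : ℕ) - c) from by
          rw [← Nat.choose_symm (show (k : ℕ) - c ≤ (k : ℕ) - (j : ℕ) by omega),
              show (k : ℕ) - (j : ℕ) - ((k : ℕ) - c) = c - (j : ℕ) by omega]] at key
    have keyR : ((n - (j : ℕ)).choose ((k : ℕ) - (j : ℕ)) : ℝ)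
          * (((k : ℕ) - (j : ℕ)).choose ((k : ℕ) - c) : ℝ)
        = ((n - (j : ℕ)).choose (c - (j : ℕ)) : ℝ) * ((n - c).choose ((k : ℕ) - c) : ℝ) := by
      exact_mod_cast congrArg (fun t : ℕ => (t : ℝ)) key
    linear_combination (-((-1 : ℝ) ^ ((k : ℕ) - c))) * keyR
  · intro hkj
    rw [hfinal]
    refine Finset.sum_eq_zero fun i _ => ?_
    by_cases h : (i : ℕ) ≤ (k : ℕ)
    · rw [show stmt8W n i j = 0 from by unfold stmt8W; rw [if_neg (by omega)], mul_zero, zero_smul]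
    · rw [show stmt8V n k i = 0 from by unfold stmt8V; rw [if_neg h], zero_mul, zero_smul]
end

section
/- Let Q be a real d×d matrix whose off-diagonal entries are nonnegative, whose columns each sum to zero, and whose rank equals d − 1, and let π ∈ ℝ^d satisfy Qπ = 0, π_i > 0 for all i, and ∑_i π_i = 1. Let λ ∈ ℝ^d have all entries strictly positive and set λ_∞ = ∑_i λ_i π_i. Then, as α → ∞ along the reals, the inverse matrices (αQ − diag(λ))^{−1} converge to −(1/λ_∞) · π 1ᵀ. -/
open Matrix Filter Polynomial

/-- Rapid switching: `(αQ − diag(λ))⁻¹ → −(1/λ_∞) π 1ᵀ` as `α → ∞`. -/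
theorem stmt_12 (d : ℕ) (hd : 1 ≤ d)
    (Q : Matrix (Fin d) (Fin d) ℝ)
    (hQoff : ∀ i j, i ≠ j → 0 ≤ Q i j)
    (hQcol : ∀ j, ∑ i, Q i j = 0)
    (hrank : Q.rank = d - 1)
    (π : Fin d → ℝ) (hπ : Q *ᵥ π = 0) (hπpos : ∀ i, 0 < π i) (hπsum : ∑ i, π i = 1)
    (l : Fin d → ℝ) (hl : ∀ i, 0 < l i)
    (linf : ℝ) (hlinf : linf = ∑ i, l i * π i) :
    Tendsto (fun α : ℝ => (α • Q - Matrix.diagonal l)⁻¹) atTop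
      (nhds (-(1 / linf) • Matrix.of (fun i _ : Fin d => π i))) := by
  classical
  have i0 : Fin d := ⟨0, hd⟩
  set D := Matrix.diagonal l with hD
  have hlinfpos : 0 < linf := by
    rw [hlinf]
    exact Finset.sum_pos (fun i _ => mul_pos (hl i) (hπpos i)) ⟨i0, Finset.mem_univ i0⟩
  have hlinfne : linf ≠ 0 := ne_of_gt hlinfpos
  -- kernel of Q is spanned by π
  have hπne : π ≠ 0 := by
    intro h
    have := hπpos i0
    rw [h] at this
    simpa using this
  have hker : ∀ v : Fin d → ℝ, Q *ᵥ v = 0 → ∃ t : ℝ, v = t • π := by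
    intro v hv
    have hmem : π ∈ LinearMap.ker Q.mulVecLin := by
      simpa [Matrix.mulVecLin_apply] using hπ
    have hspan : (ℝ ∙ π) ≤ LinearMap.ker Q.mulVecLin := by
      rwa [Submodule.span_singleton_le_iff_mem]
    have hfr : Module.finrank ℝ (LinearMap.ker Q.mulVecLin) = 1 := by
      have h1 := LinearMap.finrank_range_add_finrank_ker Q.mulVecLin
      have h2 : Module.finrank ℝ (Fin d → ℝ) = d := Module.finrank_fin_fun ℝ
      have h3 : Module.finrank ℝ (LinearMap.range Q.mulVecLin) = d - 1 := hrank
      omega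
    have hspan_eq : (ℝ ∙ π) = LinearMap.ker Q.mulVecLin :=
      Submodule.eq_of_le_of_finrank_le hspan
        (by rw [hfr, finrank_span_singleton hπne])
    have hvmem : v ∈ ℝ ∙ π := by
      rw [hspan_eq]
      simpa [Matrix.mulVecLin_apply] using hv
    obtain ⟨t, ht⟩ := Submodule.mem_span_singleton.mp hvmem
    exact ⟨t, ht.symm⟩
  -- polynomial matrices
  set M : Matrix (Fin d) (Fin d) (Polynomial ℝ) :=
    Matrix.of (fun i j => C (Q i j) - X * C (D i j)) with hM
  set N : Matrix (Fin d) (Fin d) (Polynomial ℝ) :=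
    M.updateRow i0 (fun j => C (l j)) with hN
  have hmap : ∀ β : ℝ, M.map (eval β) = Q - β • D := by
    intro β
    ext i j
    simp only [hM, Matrix.map_apply, Matrix.of_apply, eval_sub, eval_mul, eval_C, eval_X,
      Matrix.sub_apply, Matrix.smul_apply, smul_eq_mul]
  have hcolsum : ∀ j, ∑ i, M i j = (-X) * C (l j) := by
    intro j
    have hDj : ∑ i, D i j = l j := by
      simp [hD, Matrix.diagonal_apply]
    simp only [hM, Matrix.of_apply]
    rw [Finset.sum_sub_distrib, ← map_sum, hQcol j, ← Finset.mul_sum, ← map_sum, hDj]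
    simp
  have hdetMN : M.det = (-X) * N.det := by
    have h1 := Matrix.det_updateRow_sum M i0 (fun _ => (1 : Polynomial ℝ))
    simp only [one_smul, smul_eq_mul, one_mul] at h1
    have h2 : (∑ k, M k) = (-(X : Polynomial ℝ)) • (fun j => C (l j)) := by
      funext j
      have hsa : (∑ k, M k) j = ∑ k, M k j := Finset.sum_apply j _ _
      rw [hsa, hcolsum j]
      simp [smul_eq_mul]
    rw [← h1, h2, Matrix.det_updateRow_smul]
  set N0 : Matrix (Fin d) (Fin d) ℝ := Q.updateRow i0 l with hN0
  have hMmap0 : M.map (eval (0 : ℝ)) = Q := by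
    rw [hmap 0]
    simp
  have hNmap : N.map (eval (0 : ℝ)) = N0 := by
    ext i j
    by_cases h : i = i0
    · subst h
      simp [hN, hN0, Matrix.map_apply]
    · simp [hN, hN0, Matrix.map_apply, Matrix.updateRow_ne h, hM]
  -- determinant of N0 is nonzero
  have hN0det : N0.det ≠ 0 := by
    intro h0
    obtain ⟨v, hvne, hv⟩ := Matrix.exists_mulVec_eq_zero_iff.mpr h0
    have hrow : ∀ i, i ≠ i0 → (Q *ᵥ v) i = 0 := by
      intro i hi
      have h1 := congrFun hv i
      have h2 : (N0 *ᵥ v) i = (Q *ᵥ v) i := by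
        simp [Matrix.mulVec, hN0, Matrix.updateRow_ne hi]
      rw [h2] at h1
      simpa using h1
    have hlv : ∑ j, l j * v j = 0 := by
      have h1 := congrFun hv i0
      simpa [Matrix.mulVec, dotProduct, hN0] using h1
    have hsum : ∑ i, (Q *ᵥ v) i = 0 := by
      have h1 : ∑ i, (Q *ᵥ v) i = ∑ j, (∑ i, Q i j) * v j := by
        simp only [Matrix.mulVec, dotProduct, Finset.sum_mul]
        exact Finset.sum_comm
      rw [h1]
      simp [hQcol]
    have hi0 : (Q *ᵥ v) i0 = 0 := by
      have h2 : ∑ i, (Q *ᵥ v) i = (Q *ᵥ v) i0 :=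
        Finset.sum_eq_single i0 (fun i _ hi => hrow i hi)
          (fun h => absurd (Finset.mem_univ i0) h)
      rw [hsum] at h2
      exact h2.symm
    have hQv : Q *ᵥ v = 0 := by
      funext i
      by_cases h : i = i0
      · subst h; simpa using hi0
      · simpa using hrow i h
    obtain ⟨t, rfl⟩ := hker v hQv
    have htlinf : t * linf = 0 := by
      rw [hlinf, Finset.mul_sum, ← hlv]
      apply Finset.sum_congr rfl
      intro j _
      simp [smul_eq_mul]
      ring
    have ht0 : t = 0 := by
      rcases mul_eq_zero.mp htlinf with h | h
      · exact h
      · exact absurd h hlinfne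
    subst ht0
    simp at hvne
  -- key identity: l ᵥ* adjugate M = N.det • 1
  have hkey : ((fun i => C (l i)) ᵥ* adjugate M) = fun _ : Fin d => N.det := by
    have h1 : ((fun _ : Fin d => (1 : Polynomial ℝ)) ᵥ* M) = (-(X : Polynomial ℝ)) • (fun j => C (l j)) := by
      funext j
      simp only [Matrix.vecMul, dotProduct, one_mul, Pi.smul_apply, smul_eq_mul]
      exact hcolsum j
    have h2 : ((fun _ : Fin d => (1 : Polynomial ℝ)) ᵥ* M) ᵥ* adjugate M
        = (fun _ : Fin d => (1 : Polynomial ℝ)) ᵥ* (M * adjugate M) :=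
      Matrix.vecMul_vecMul _ _ _
    rw [Matrix.mul_adjugate, hdetMN, h1, Matrix.smul_vecMul] at h2
    have h3 : (fun _ : Fin d => (1 : Polynomial ℝ)) ᵥ* (((-X) * N.det) • (1 : Matrix (Fin d) (Fin d) (Polynomial ℝ)))
        = fun _ : Fin d => (-X) * N.det := by
      funext j
      simp [Matrix.vecMul, dotProduct, Matrix.smul_apply, Matrix.one_apply, mul_ite]
    rw [h3] at h2
    funext j
    have h4 := congrFun h2 j
    simp only [Pi.smul_apply, smul_eq_mul] at h4
    exact mul_left_cancel₀ (neg_ne_zero.mpr Polynomial.X_ne_zero) h4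
  -- adjugate relations under eval
  have hadjmap : ∀ β : ℝ, adjugate (Q - β • D) = (adjugate M).map (eval β) := by
    intro β
    rw [← hmap β]
    have := (evalRingHom β).map_adjugate M
    simp only [RingHom.mapMatrix_apply, Polynomial.coe_evalRingHom] at this
    rw [← this]
  have hdetmap : ∀ β : ℝ, (Q - β • D).det = eval β M.det := by
    intro β
    rw [← hmap β]
    have := (evalRingHom β).map_det M
    simp only [RingHom.mapMatrix_apply, Polynomial.coe_evalRingHom] at this
    rw [← this]
  have hNdet0 : eval (0 : ℝ) N.det = N0.det := by
    have := (evalRingHom (0 : ℝ)).map_det N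
    simp only [RingHom.mapMatrix_apply, Polynomial.coe_evalRingHom] at this
    rw [← hNmap]
    exact this
  -- adjugate of Q at eval 0
  have hadjQeval : adjugate Q = (adjugate M).map (eval (0 : ℝ)) := by
    have := hadjmap 0
    simpa using this
  have hdetQ0 : Q.det = 0 := by
    have h1 : Q.det = eval (0 : ℝ) M.det := by
      have := hdetmap 0
      simpa using this
    rw [h1, hdetMN]
    simp
  have hadjQ0 : ∀ j, ∑ i, l i * (adjugate Q) i j = N0.det := by
    intro j
    have h1 := congrFun hkey j
    have h2 := congrArg (eval (0 : ℝ)) h1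
    simp only [Matrix.vecMul, dotProduct] at h2
    rw [eval_finset_sum] at h2
    simp only [eval_mul, eval_C] at h2
    rw [hNdet0] at h2
    rw [hadjQeval]
    simpa [Matrix.map_apply] using h2
  have hadjcol : ∀ j, ∃ t : ℝ, (fun i => adjugate Q i j) = t • π := by
    intro j
    apply hker
    have h6 := Matrix.mul_adjugate Q
    rw [hdetQ0, zero_smul] at h6
    funext i
    have h7 := congrFun (congrFun h6 i) j
    simpa [Matrix.mul_apply, Matrix.mulVec, dotProduct] using h7
  have hadjQ : ∀ i j, adjugate Q i j = (N0.det / linf) * π i := by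
    intro i j
    obtain ⟨t, ht⟩ := hadjcol j
    have hti : adjugate Q i j = t * π i := by
      have := congrFun ht i
      simpa [smul_eq_mul] using this
    have htsum : t * linf = N0.det := by
      rw [hlinf, Finset.mul_sum, ← hadjQ0 j]
      apply Finset.sum_congr rfl
      intro k _
      have hk := congrFun ht k
      simp only [Pi.smul_apply, smul_eq_mul] at hk
      rw [hk]
      ring
    have htval : t = N0.det / linf := by
      rw [eq_div_iff hlinfne]
      exact htsum
    rw [hti, htval]
  -- the limiting function
  set r : ℝ → ℝ := fun β => eval β N.det with hr
  have hr0 : r 0 ≠ 0 := by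
    rw [hr]
    simpa [hNdet0] using hN0det
  set G : ℝ → Matrix (Fin d) (Fin d) ℝ :=
    fun β => (-(r β)⁻¹) • (adjugate M).map (eval β) with hG
  have hGcont : ContinuousAt G 0 := by
    apply ContinuousAt.fun_smul
    · exact (((N.det.continuous).continuousAt.inv₀ hr0).neg :)
    · apply Continuous.continuousAt
      apply continuous_matrix
      intro i j
      exact ((adjugate M) i j).continuous
  have hG0 : G 0 = -(1 / linf) • Matrix.of (fun i _ : Fin d => π i) := by
    ext i j
    simp only [hG, ← hadjQeval, Matrix.smul_apply, smul_eq_mul, Matrix.of_apply]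
    rw [hadjQ i j]
    have : r 0 = N0.det := by rw [hr]; exact hNdet0
    rw [this]
    field_simp
  -- eventual equality
  have hev : ∀ᶠ α : ℝ in atTop, (α • Q - D)⁻¹ = G α⁻¹ := by
    have h7 : ∀ᶠ α : ℝ in atTop, r α⁻¹ ≠ 0 := by
      have h8 : Tendsto (fun α : ℝ => r α⁻¹) atTop (nhds (r 0)) :=
        ((N.det.continuous).continuousAt.tendsto).comp tendsto_inv_atTop_zero
      exact h8.eventually_ne hr0
    filter_upwards [h7, eventually_gt_atTop (0 : ℝ)] with α hrne hαpos
    have hαne : α ≠ 0 := ne_of_gt hαpos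
    apply Matrix.inv_eq_right_inv
    have hfact : α • Q - D = α • (Q - α⁻¹ • D) := by
      rw [smul_sub, smul_smul, mul_inv_cancel₀ hαne, one_smul]
    have hmul : (Q - α⁻¹ • D) * ((adjugate M).map (eval α⁻¹))
        = (eval α⁻¹ M.det) • (1 : Matrix (Fin d) (Fin d) ℝ) := by
      rw [← hadjmap α⁻¹, Matrix.mul_adjugate, hdetmap α⁻¹]
    have heval : eval α⁻¹ M.det = -α⁻¹ * r α⁻¹ := by
      rw [hdetMN]
      simp [hr]
    rw [hfact, hG, Matrix.smul_mul, Matrix.mul_smul, hmul, heval, smul_smul, smul_smul]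
    have hs : α * -(r α⁻¹)⁻¹ * (-α⁻¹ * r α⁻¹) = 1 := by
      have h9 : α * -(r α⁻¹)⁻¹ * (-α⁻¹ * r α⁻¹) = (α * α⁻¹) * ((r α⁻¹)⁻¹ * r α⁻¹) := by ring
      rw [h9, mul_inv_cancel₀ hαne, inv_mul_cancel₀ hrne, mul_one]
    rw [hs, one_smul]
  have hlim : Tendsto (fun α : ℝ => G α⁻¹) atTop (nhds (G 0)) :=
    (hGcont.tendsto).comp tendsto_inv_atTop_zero
  rw [← hG0]
  exact Filter.Tendsto.congr' (EventuallyEq.symm hev) hlim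
end

section
/- Let Q be a real d×d matrix whose off-diagonal entries are nonnegative, whose columns each sum to zero, and whose rank equals d − 1, and let π ∈ ℝ^d satisfy Qπ = 0, π_i > 0 for all i, and ∑_i π_i = 1. Then for every fixed t > 0, as α → ∞ along the reals, exp(αtQ) converges to π 1ᵀ. -/
open Matrix Filter NormedSpace

namespace Stmt14Aux

variable {d : ℕ}

/-- Entry of a matrix as a continuous linear map. -/
noncomputable def entryCLM (i j : Fin d) : Matrix (Fin d) (Fin d) ℝ →L[ℝ] ℝ := by
  letI : SeminormedRing (Matrix (Fin d) (Fin d) ℝ) := Matrix.linftyOpSemiNormedRing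
  letI : NormedRing (Matrix (Fin d) (Fin d) ℝ) := Matrix.linftyOpNormedRing
  letI : NormedAlgebra ℝ (Matrix (Fin d) (Fin d) ℝ) := Matrix.linftyOpNormedAlgebra
  exact LinearMap.toContinuousLinearMap
    { toFun := fun M => M i j
      map_add' := fun _ _ => rfl
      map_smul' := fun _ _ => rfl }

lemma summable_entry (M : Matrix (Fin d) (Fin d) ℝ) (i j : Fin d) :
    Summable (fun n : ℕ => ((Nat.factorial n : ℝ)⁻¹) * (M ^ n) i j) := by
  letI : SeminormedRing (Matrix (Fin d) (Fin d) ℝ) := Matrix.linftyOpSemiNormedRing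
  letI : NormedRing (Matrix (Fin d) (Fin d) ℝ) := Matrix.linftyOpNormedRing
  letI : NormedAlgebra ℝ (Matrix (Fin d) (Fin d) ℝ) := Matrix.linftyOpNormedAlgebra
  have hs : Summable (fun n : ℕ => ((Nat.factorial n : ℝ)⁻¹) • M ^ n) := expSeries_summable' M
  have := hs.map (entryCLM i j).toLinearMap.toAddMonoidHom (entryCLM i j).continuous
  exact this

lemma exp_entry (M : Matrix (Fin d) (Fin d) ℝ) (i j : Fin d) :
    exp M i j = ∑' n : ℕ, ((Nat.factorial n : ℝ)⁻¹) * (M ^ n) i j := by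
  letI : SeminormedRing (Matrix (Fin d) (Fin d) ℝ) := Matrix.linftyOpSemiNormedRing
  letI : NormedRing (Matrix (Fin d) (Fin d) ℝ) := Matrix.linftyOpNormedRing
  letI : NormedAlgebra ℝ (Matrix (Fin d) (Fin d) ℝ) := Matrix.linftyOpNormedAlgebra
  have hs : Summable (fun n : ℕ => ((Nat.factorial n : ℝ)⁻¹) • M ^ n) := expSeries_summable' M
  have h := (entryCLM (d := d) i j).map_tsum hs
  rw [exp_eq_tsum (𝕂 := ℝ)]
  exact h



lemma pow_entry_nonneg {B : Matrix (Fin d) (Fin d) ℝ} (hB : ∀ i j, 0 ≤ B i j) :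
    ∀ (n : ℕ) (i j : Fin d), 0 ≤ (B ^ n) i j := by
  intro n
  induction n with
  | zero => intro i j; by_cases h : i = j <;> simp [h, Matrix.one_apply]
  | succ n ih =>
    intro i j
    rw [pow_succ, Matrix.mul_apply]
    exact Finset.sum_nonneg fun k _ => mul_nonneg (ih i k) (hB k j)

lemma exp_smul_one (r : ℝ) :
    exp (r • (1 : Matrix (Fin d) (Fin d) ℝ)) = Real.exp r • 1 := by
  rw [Matrix.smul_one_eq_diagonal, Matrix.exp_diagonal]
  rw [Matrix.smul_one_eq_diagonal]
  congr 1
  funext i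
  rw [Pi.exp_def, Real.exp_eq_exp_ℝ]

/-- column sums of `M * N` vanish if those of `M` do -/
lemma colsum_mul {M N : Matrix (Fin d) (Fin d) ℝ} (hM : ∀ j, ∑ i, M i j = 0) (j : Fin d) :
    ∑ i, (M * N) i j = 0 := by
  simp_rw [Matrix.mul_apply]
  rw [Finset.sum_comm]
  simp_rw [← Finset.sum_mul]
  simp [hM]

lemma colsum_pow {M : Matrix (Fin d) (Fin d) ℝ} (hM : ∀ j, ∑ i, M i j = 0) (n : ℕ)
    (hn : n ≠ 0) (j : Fin d) : ∑ i, (M ^ n) i j = 0 := by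
  obtain ⟨m, rfl⟩ := Nat.exists_eq_succ_of_ne_zero hn
  rw [pow_succ']
  exact colsum_mul hM j

lemma colsum_exp {M : Matrix (Fin d) (Fin d) ℝ} (hM : ∀ j, ∑ i, M i j = 0) (j : Fin d) :
    ∑ i, exp M i j = 1 := by
  have : ∀ i : Fin d, exp M i j = ∑' n : ℕ, ((Nat.factorial n : ℝ)⁻¹) * (M ^ n) i j :=
    fun i => exp_entry M i j
  simp_rw [this]
  rw [← Summable.tsum_finsetSum (fun i _ => summable_entry M i j)]
  rw [tsum_eq_single 0]
  · simp [Matrix.one_apply, Finset.sum_ite_eq]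
  · intro n hn
    rw [← Finset.mul_sum]
    rw [colsum_pow hM n hn, mul_zero]

lemma mulvec_pow_eq_zero {M : Matrix (Fin d) (Fin d) ℝ} {v : Fin d → ℝ} (hv : M *ᵥ v = 0)
    (n : ℕ) (hn : n ≠ 0) : (M ^ n) *ᵥ v = 0 := by
  induction n with
  | zero => simp at hn
  | succ n ih =>
    rcases Nat.eq_zero_or_pos n with h | h
    · subst h; simpa using hv
    · rw [pow_succ, ← Matrix.mulVec_mulVec, hv]
      simp

lemma exp_mulVec {M : Matrix (Fin d) (Fin d) ℝ} {v : Fin d → ℝ} (hv : M *ᵥ v = 0) :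
    exp M *ᵥ v = v := by
  funext i
  rw [Matrix.mulVec, dotProduct]
  have : ∀ k : Fin d, exp M i k * v k
      = ∑' n : ℕ, ((Nat.factorial n : ℝ)⁻¹) * (M ^ n) i k * v k := by
    intro k
    rw [exp_entry]
    exact (tsum_mul_right).symm
  simp_rw [this]
  rw [← Summable.tsum_finsetSum (fun k _ => (summable_entry M i k).mul_right _)]
  rw [tsum_eq_single 0]
  · simp [Matrix.one_apply, Finset.sum_ite_eq]
  · intro n hn
    have h0 : (M ^ n) *ᵥ v = 0 := mulvec_pow_eq_zero hv n hn
    have h0i : ∑ k, (M ^ n) i k * v k = 0 := by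
      have := congrFun h0 i
      simpa [Matrix.mulVec, dotProduct] using this
    simp_rw [mul_assoc, ← Finset.mul_sum]
    rw [h0i, mul_zero]


lemma exp_decomp (Q B : Matrix (Fin d) (Fin d) ℝ) (c : ℝ) (hBdef : B = Q + c • 1) (s : ℝ) :
    exp (s • Q) = Real.exp (-(s * c)) • exp (s • B) := by
  have h1 : s • Q = (-(s * c)) • (1 : Matrix (Fin d) (Fin d) ℝ) + s • B := by
    rw [hBdef]; module
  rw [h1, Matrix.exp_add_of_commute, exp_smul_one, smul_one_mul]
  exact (Commute.one_left (s • B)).smul_left _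

lemma exp_smul_nonneg (Q B : Matrix (Fin d) (Fin d) ℝ) (c : ℝ) (hBdef : B = Q + c • 1)
    (hB : ∀ i j, 0 ≤ B i j) (s : ℝ) (hs : 0 ≤ s) (i j : Fin d) :
    0 ≤ exp (s • Q) i j := by
  rw [exp_decomp Q B c hBdef s]
  have h2 : 0 ≤ exp (s • B) i j := by
    rw [exp_entry]
    refine tsum_nonneg fun n => ?_
    have : ∀ i j, 0 ≤ (s • B) i j := fun i j => smul_nonneg hs (hB i j)
    exact mul_nonneg (by positivity) (pow_entry_nonneg this n i j)
  have : (Real.exp (-(s * c)) • exp (s • B)) i j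
      = Real.exp (-(s * c)) * exp (s • B) i j := rfl
  rw [this]
  exact mul_nonneg (Real.exp_nonneg _) h2

lemma exp_smul_pos (Q B : Matrix (Fin d) (Fin d) ℝ) (c : ℝ) (hBdef : B = Q + c • 1)
    (hB : ∀ i j, 0 ≤ B i j) (s : ℝ) (hs : 0 < s) (i j : Fin d)
    (hreach : ∃ n : ℕ, 0 < (B ^ n) i j) :
    0 < exp (s • Q) i j := by
  rw [exp_decomp Q B c hBdef s]
  obtain ⟨n, hn⟩ := hreach
  have hBs : ∀ i j, 0 ≤ (s • B) i j := fun i j => smul_nonneg hs.le (hB i j)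
  have h2 : 0 < exp (s • B) i j := by
    rw [exp_entry]
    have hterm : (Nat.factorial n : ℝ)⁻¹ * ((s • B) ^ n) i j
        ≤ ∑' m : ℕ, ((Nat.factorial m : ℝ)⁻¹) * ((s • B) ^ m) i j := by
      refine Summable.le_tsum (summable_entry _ i j) n fun m _ => ?_
      exact mul_nonneg (by positivity) (pow_entry_nonneg hBs m i j)
    refine lt_of_lt_of_le ?_ hterm
    rw [smul_pow]
    have : ((s ^ n) • (B ^ n)) i j = s ^ n * (B ^ n) i j := rfl
    rw [this]
    positivity
  have : (Real.exp (-(s * c)) • exp (s • B)) i j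
      = Real.exp (-(s * c)) * exp (s • B) i j := rfl
  rw [this]
  exact mul_pos (Real.exp_pos _) h2

lemma reach (hd : 1 ≤ d) (Q B : Matrix (Fin d) (Fin d) ℝ) (c : ℝ) (hBdef : B = Q + c • 1)
    (hB : ∀ i j, 0 ≤ B i j)
    (hQoff : ∀ i j, i ≠ j → 0 ≤ Q i j) (hQcol : ∀ j, ∑ i, Q i j = 0)
    (hrank : Q.rank = d - 1)
    (π : Fin d → ℝ) (hπ : Q *ᵥ π = 0) (hπpos : ∀ i, 0 < π i)
    (j i : Fin d) : ∃ n : ℕ, 0 < (B ^ n) i j := by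
  classical
  set S : Finset (Fin d) := Finset.univ.filter (fun i => ∃ n, 0 < (B ^ n) i j) with hS
  have hmem : ∀ l, l ∈ S ↔ ∃ n, 0 < (B ^ n) l j := by simp [hS]
  have hjS : j ∈ S := (hmem j).2 ⟨0, by simp [Matrix.one_apply]⟩
  by_contra hiS'
  have hiS : i ∉ S := fun h => hiS' ((hmem i).1 h)
  have hclosed : ∀ k ∈ S, ∀ l, 0 < B l k → l ∈ S := by
    intro k hk l hl
    obtain ⟨n, hn⟩ := (hmem k).1 hk
    refine (hmem l).2 ⟨n + 1, ?_⟩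
    rw [pow_succ', Matrix.mul_apply]
    have hpos : 0 < B l k * (B ^ n) k j := mul_pos hl hn
    refine lt_of_lt_of_le hpos ?_
    exact Finset.single_le_sum
      (fun m _ => mul_nonneg (hB l m) (pow_entry_nonneg hB n m j)) (Finset.mem_univ k)
  set x : Fin d → ℝ := fun k => if k ∈ S then π k else 0 with hx
  have hoffQ : ∀ k ∈ S, ∀ l, l ∉ S → Q l k = 0 := by
    intro k hk l hl
    have hne : l ≠ k := fun h => hl (h ▸ hk)
    rcases lt_or_eq_of_le (hQoff l k hne) with h | h
    · have hBlk : B l k = Q l k := by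
        rw [hBdef]; simp [Matrix.one_apply, hne]
      exact absurd (hclosed k hk l (by rw [hBlk]; exact h)) hl
    · exact h.symm
  have hxsum : ∀ l, (Q *ᵥ x) l = ∑ k ∈ S, Q l k * π k := by
    intro l
    show ∑ k, Q l k * x k = _
    rw [Finset.sum_filter]
    congr 1; funext k
    by_cases hk : k ∈ S
    · simp [hx, hk, (hmem k).1 hk]
    · have hP : ¬∃ n, 0 < (B ^ n) k j := fun h => hk ((hmem k).2 h)
      simp [hx, hk, hP]
  have hle : ∀ l, (Q *ᵥ x) l ≤ 0 := by
    intro l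
    rw [hxsum]
    by_cases hl : l ∈ S
    · have hsplit : ∑ k ∈ S, Q l k * π k + ∑ k ∈ Sᶜ, Q l k * π k = 0 := by
        rw [Finset.sum_add_sum_compl]
        have := congrFun hπ l
        simpa [Matrix.mulVec, dotProduct] using this
      have hcompl : 0 ≤ ∑ k ∈ Sᶜ, Q l k * π k := by
        refine Finset.sum_nonneg fun k hk => ?_
        have hkS : k ∉ S := Finset.mem_compl.1 hk
        have hne : l ≠ k := fun h => hkS (h ▸ hl)
        exact mul_nonneg (hQoff l k hne) (hπpos k).le
      linarith
    · have : ∑ k ∈ S, Q l k * π k = 0 :=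
        Finset.sum_eq_zero fun k hk => by rw [hoffQ k hk l hl, zero_mul]
      rw [this]
  have hsum : ∑ l, (Q *ᵥ x) l = 0 := by
    show ∑ l, ∑ k, Q l k * x k = 0
    rw [Finset.sum_comm]
    simp_rw [← Finset.sum_mul]
    simp [hQcol]
  have hQx : Q *ᵥ x = 0 := by
    funext l
    have h0 : ∑ l, -(Q *ᵥ x) l = 0 := by rw [Finset.sum_neg_distrib, hsum, neg_zero]
    have := (Finset.sum_eq_zero_iff_of_nonneg
      (fun l _ => neg_nonneg.2 (hle l))).1 h0 l (Finset.mem_univ l)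
    simpa using this
  have hker1 : Module.finrank ℝ (LinearMap.ker Q.mulVecLin) = 1 := by
    have h1 := LinearMap.finrank_range_add_finrank_ker Q.mulVecLin
    rw [Module.finrank_fin_fun] at h1
    have h2 : Q.rank = Module.finrank ℝ (LinearMap.range Q.mulVecLin) := rfl
    rw [← h2, hrank] at h1
    omega
  have hπker : π ∈ LinearMap.ker Q.mulVecLin := by
    rw [LinearMap.mem_ker, Matrix.mulVecLin_apply, hπ]
  have hxker : x ∈ LinearMap.ker Q.mulVecLin := by
    rw [LinearMap.mem_ker, Matrix.mulVecLin_apply, hQx]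
  have hπne : (⟨π, hπker⟩ : LinearMap.ker Q.mulVecLin) ≠ 0 := by
    intro h
    have := congrFun (congrArg Subtype.val h) j
    exact absurd this (ne_of_gt (hπpos j))
  obtain ⟨cc, hcc⟩ := (finrank_eq_one_iff_of_nonzero' _ hπne).1 hker1 ⟨x, hxker⟩
  have hccfun : cc • π = x := congrArg Subtype.val hcc
  have hci : cc * π i = x i := congrFun hccfun i
  have hxi : x i = 0 := by simp [hx, hiS]
  have hcc0 : cc = 0 := by
    rw [hxi] at hci
    exact (mul_eq_zero.1 hci).resolve_right (ne_of_gt (hπpos i))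
  have hxj : x j = π j := by simp [hx, hjS]
  have : (0 : ℝ) = π j := by
    have := congrFun hccfun j
    rw [hcc0] at this
    simpa [hxj] using this
  exact absurd this.symm (ne_of_gt (hπpos j))

lemma sum_mulVec_eq {S : Matrix (Fin d) (Fin d) ℝ} (hScol : ∀ j, ∑ i, S i j = 1)
    (x : Fin d → ℝ) : ∑ i, (S *ᵥ x) i = ∑ k, x k := by
  show ∑ i, ∑ k, S i k * x k = _
  rw [Finset.sum_comm]
  simp_rw [← Finset.sum_mul]
  simp [hScol]

lemma contract {S : Matrix (Fin d) (Fin d) ℝ} {ε : ℝ}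
    (hScol : ∀ j, ∑ i, S i j = 1) (hεle : ∀ i j, ε ≤ S i j)
    (x : Fin d → ℝ) (hx : ∑ k, x k = 0) :
    ∑ i, |(S *ᵥ x) i| ≤ (1 - (d : ℝ) * ε) * ∑ k, |x k| := by
  have key : ∀ i, (S *ᵥ x) i = ∑ k, (S i k - ε) * x k := by
    intro i
    show ∑ k, S i k * x k = _
    simp_rw [sub_mul]
    rw [Finset.sum_sub_distrib, ← Finset.mul_sum, hx, mul_zero, sub_zero]
  calc ∑ i, |(S *ᵥ x) i| ≤ ∑ i, ∑ k, (S i k - ε) * |x k| := by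
        refine Finset.sum_le_sum fun i _ => ?_
        rw [key i]
        refine (Finset.abs_sum_le_sum_abs _ _).trans ?_
        refine Finset.sum_le_sum fun k _ => ?_
        rw [abs_mul, abs_of_nonneg (sub_nonneg.2 (hεle i k))]
    _ = ∑ k, (1 - (d : ℝ) * ε) * |x k| := by
        rw [Finset.sum_comm]
        refine Finset.sum_congr rfl fun k _ => ?_
        rw [← Finset.sum_mul]
        congr 1
        rw [Finset.sum_sub_distrib, hScol k, Finset.sum_const, Finset.card_univ,
          Fintype.card_fin, nsmul_eq_mul]
    _ = (1 - (d : ℝ) * ε) * ∑ k, |x k| := (Finset.mul_sum _ _ _).symm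

lemma contract_pow {S : Matrix (Fin d) (Fin d) ℝ} {ε : ℝ}
    (hScol : ∀ j, ∑ i, S i j = 1) (hεle : ∀ i j, ε ≤ S i j)
    (hεd : (d : ℝ) * ε ≤ 1)
    (n : ℕ) (x : Fin d → ℝ) (hx : ∑ k, x k = 0) :
    ∑ i, |((S ^ n) *ᵥ x) i| ≤ (1 - (d : ℝ) * ε) ^ n * ∑ k, |x k| := by
  have hq0 : 0 ≤ 1 - (d : ℝ) * ε := by linarith
  induction n with
  | zero => simp
  | succ n ih =>
    have hx' : ∑ k, ((S ^ n) *ᵥ x) k = 0 := by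
      have hScoln : ∀ m (j : Fin d), ∑ i, (S ^ m) i j = 1 := by
        intro m
        induction m with
        | zero => intro j; simp [Matrix.one_apply, Finset.sum_ite_eq]
        | succ m ihm =>
          intro j
          rw [pow_succ']
          show ∑ i, ∑ k, S i k * (S ^ m) k j = 1
          rw [Finset.sum_comm]
          simp_rw [← Finset.sum_mul]
          simp only [hScol]
          simpa using ihm j
      rw [sum_mulVec_eq (hScoln n) x, hx]
    rw [pow_succ', ← Matrix.mulVec_mulVec]
    calc ∑ i, |(S *ᵥ ((S ^ n) *ᵥ x)) i| ≤ (1 - (d : ℝ) * ε) * ∑ k, |((S ^ n) *ᵥ x) k| :=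
          contract hScol hεle _ hx'
      _ ≤ (1 - (d : ℝ) * ε) * ((1 - (d : ℝ) * ε) ^ n * ∑ k, |x k|) :=
          mul_le_mul_of_nonneg_left ih hq0
      _ = (1 - (d : ℝ) * ε) ^ (n + 1) * ∑ k, |x k| := by ring

end Stmt14Aux

open Stmt14Aux in
/-- Rapid switching: `exp(αtQ) → π 1ᵀ` as `α → ∞`. -/
theorem stmt_14 (d : ℕ) (hd : 1 ≤ d)
    (Q : Matrix (Fin d) (Fin d) ℝ)
    (hQoff : ∀ i j, i ≠ j → 0 ≤ Q i j)
    (hQcol : ∀ j, ∑ i, Q i j = 0)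
    (hrank : Q.rank = d - 1)
    (π : Fin d → ℝ) (hπ : Q *ᵥ π = 0) (hπpos : ∀ i, 0 < π i) (hπsum : ∑ i, π i = 1)
    (t : ℝ) (ht : 0 < t) :
    Tendsto (fun α : ℝ => exp ((α * t) • Q)) atTop
      (nhds (Matrix.of (fun i _ : Fin d => π i))) := by
  haveI : NeZero d := ⟨by omega⟩
  classical
  set c : ℝ := 1 + ∑ i, |Q i i| with hc
  set B : Matrix (Fin d) (Fin d) ℝ := Q + c • 1 with hBdef
  have hB : ∀ i j, 0 ≤ B i j := by
    intro i j
    by_cases h : i = j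
    · subst h
      have h1 : B i i = Q i i + c := by simp [hBdef, Matrix.one_apply]
      have h2 : |Q i i| ≤ ∑ k, |Q k k| :=
        Finset.single_le_sum (f := fun k => |Q k k|) (fun k _ => abs_nonneg _)
          (Finset.mem_univ i)
      have h3 := neg_abs_le (Q i i)
      rw [h1, hc]; linarith
    · have h1 : B i j = Q i j := by simp [hBdef, Matrix.one_apply, h]
      rw [h1]; exact hQoff i j h
  have hreach := reach hd Q B c hBdef hB hQoff hQcol hrank π hπ hπpos
  set S := exp (t • Q) with hSdef
  have hSpos : ∀ i j, 0 < S i j := fun i j =>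
    exp_smul_pos Q B c hBdef hB t ht i j (hreach j i)
  have hcolQ : ∀ (s : ℝ) (j : Fin d), ∑ i, (s • Q) i j = 0 := by
    intro s j
    have h1 : ∑ i, (s • Q) i j = s * ∑ i, Q i j := by
      rw [Finset.mul_sum]
      refine Finset.sum_congr rfl fun i _ => rfl
    rw [h1, hQcol, mul_zero]
  have hScol : ∀ j, ∑ i, S i j = 1 := fun j => colsum_exp (hcolQ t) j
  have hSπ : S *ᵥ π = π :=
    exp_mulVec (by rw [Matrix.smul_mulVec, hπ, smul_zero])
  set ε : ℝ := Finset.univ.inf' Finset.univ_nonempty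
    (fun p : Fin d × Fin d => S p.1 p.2) with hεdef
  have hεpos : 0 < ε := by
    rw [hεdef, Finset.lt_inf'_iff]
    exact fun p _ => hSpos p.1 p.2
  have hεle : ∀ i j, ε ≤ S i j := fun i j =>
    Finset.inf'_le _ (Finset.mem_univ (i, j))
  have hεd : (d : ℝ) * ε ≤ 1 := by
    have j0 : Fin d := ⟨0, hd⟩
    calc (d : ℝ) * ε = ∑ _i : Fin d, ε := by
          rw [Finset.sum_const, Finset.card_univ, Fintype.card_fin, nsmul_eq_mul]
      _ ≤ ∑ i, S i j0 := Finset.sum_le_sum fun i _ => hεle i j0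
      _ = 1 := hScol j0
  set q : ℝ := 1 - (d : ℝ) * ε with hq
  have hq0 : 0 ≤ q := by rw [hq]; linarith
  have hq1 : q < 1 := by
    rw [hq]
    have : (0 : ℝ) < (d : ℝ) * ε := by
      have : (0 : ℝ) < (d : ℝ) := by exact_mod_cast Nat.pos_of_ne_zero (by omega)
      exact mul_pos this hεpos
    linarith
  have key : ∀ α : ℝ, 0 ≤ α → ∀ i j, |exp ((α * t) • Q) i j - π i| ≤ 2 * q ^ ⌊α⌋₊ := by
    intro α hα i j
    set n := ⌊α⌋₊ with hn
    set r : ℝ := α - n with hr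
    have hr0 : 0 ≤ r := by rw [hr]; exact sub_nonneg.2 (Nat.floor_le hα)
    set E := exp ((r * t) • Q) with hEdef
    have hexp : exp ((α * t) • Q) = S ^ n * E := by
      have hsplit : (α * t) • Q = ((n : ℝ) * t) • Q + (r * t) • Q := by
        rw [← add_smul]
        congr 1
        rw [hr]; ring
      have hcomm : Commute (((n : ℝ) * t) • Q) ((r * t) • Q) :=
        ((Commute.refl Q).smul_left _).smul_right _
      rw [hsplit, Matrix.exp_add_of_commute]
      · rw [hEdef]
        congr 1
        rw [hSdef, ← Matrix.exp_nsmul]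
        congr 1
        rw [← Nat.cast_smul_eq_nsmul ℝ, smul_smul]
      · exact hcomm
    have hEcol : ∑ k, E k j = 1 := colsum_exp (hcolQ _) j
    have hEnn : ∀ k, 0 ≤ E k j := fun k =>
      exp_smul_nonneg Q B c hBdef hB _ (mul_nonneg hr0 ht.le) k j
    set u : Fin d → ℝ := fun k => E k j - π k with hu
    have husum : ∑ k, u k = 0 := by
      rw [hu]
      rw [Finset.sum_sub_distrib, hEcol, hπsum, sub_self]
    have hu2 : ∑ k, |u k| ≤ 2 := by
      have h1 : ∀ k, |u k| ≤ E k j + π k := by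
        intro k
        rw [hu]
        have := abs_sub (E k j) (π k)
        rw [abs_of_nonneg (hEnn k), abs_of_nonneg (hπpos k).le] at this
        exact this
      calc ∑ k, |u k| ≤ ∑ k, (E k j + π k) := Finset.sum_le_sum fun k _ => h1 k
        _ = 2 := by rw [Finset.sum_add_distrib, hEcol, hπsum]; norm_num
    have hSn : (S ^ n) *ᵥ π = π := by
      rw [hSdef, ← Matrix.exp_nsmul]
      refine exp_mulVec ?_
      rw [← Nat.cast_smul_eq_nsmul ℝ, smul_smul, Matrix.smul_mulVec, hπ, smul_zero]
    have hcolu : ∀ i', exp ((α * t) • Q) i' j - π i' = ((S ^ n) *ᵥ u) i' := by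
      intro i'
      have h0 : ((S ^ n) *ᵥ u) i' = ∑ k, (S ^ n) i' k * (E k j - π k) := rfl
      rw [h0]
      simp_rw [mul_sub]
      rw [Finset.sum_sub_distrib]
      have h1 : ∑ k, (S ^ n) i' k * E k j = exp ((α * t) • Q) i' j := by
        rw [hexp, Matrix.mul_apply]
      have h2 : ∑ k, (S ^ n) i' k * π k = π i' := by
        have := congrFun hSn i'
        simpa [Matrix.mulVec, dotProduct] using this
      rw [h1, h2]
    calc |exp ((α * t) • Q) i j - π i| = |((S ^ n) *ᵥ u) i| := by rw [hcolu i]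
      _ ≤ ∑ i', |((S ^ n) *ᵥ u) i'| :=
          Finset.single_le_sum (f := fun i' => |((S ^ n) *ᵥ u) i'|)
            (fun _ _ => abs_nonneg _) (Finset.mem_univ i)
      _ ≤ q ^ n * ∑ k, |u k| := contract_pow hScol hεle hεd n u husum
      _ ≤ q ^ n * 2 := mul_le_mul_of_nonneg_left hu2 (pow_nonneg hq0 n)
      _ = 2 * q ^ n := mul_comm _ _
  have hlim : Tendsto (fun α : ℝ => 2 * q ^ ⌊α⌋₊) atTop (nhds 0) := by
    have h1 : Tendsto (fun m : ℕ => q ^ m) atTop (nhds 0) :=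
      tendsto_pow_atTop_nhds_zero_of_lt_one hq0 hq1
    have h2 := (h1.comp (tendsto_nat_floor_atTop (α := ℝ))).const_mul 2
    simpa using h2
  refine tendsto_pi_nhds.2 ?_
  intro i
  rw [tendsto_pi_nhds]
  intro j
  have hzero : Tendsto (fun α : ℝ => exp ((α * t) • Q) i j - π i) atTop (nhds 0) := by
    refine squeeze_zero_norm' ?_ hlim
    filter_upwards [eventually_ge_atTop (0 : ℝ)] with α hα
    exact key α hα i j
  have := hzero.add_const (π i)
  simp only [sub_add_cancel, zero_add] at this
  simpa [Matrix.of_apply] using this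
end

section
/- Let Q be a real d×d matrix and λ ∈ ℝ^d, regarded as complex, let n ∈ ℕ and x(0) ∈ ℂ^d. Define φ : ℝ × ℝ → ℂ^d by φ(t,u) = ∑_{j=0}^{n} C(n,j) · e^{iuj} · (1 − e^{iu})^{n−j} · exp(t(Q − (n−j)·diag(λ))) · x(0). Then for every (t,u) the partial derivatives ∂φ/∂t and ∂φ/∂u exist and satisfy the PDE ∂φ/∂t (t,u) = (Q + n(e^{iu} − 1)·diag(λ)) · φ(t,u) + i(e^{iu} − 1) · diag(λ) · ∂φ/∂u (t,u). -/
open Matrix NormedSpace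

private lemma scalar_key (C E z : ℂ) (n j : ℕ) (hj : j ≤ n) :
    -(((n - j : ℕ) : ℂ) * (C * E * (1 - z) ^ (n - j))) =
      ((n : ℂ) * (z - 1)) * (C * E * (1 - z) ^ (n - j)) +
      (Complex.I * (z - 1)) * (Complex.I * (j : ℂ) * C * E * (1 - z) ^ (n - j)
        - ((n - j : ℕ) : ℂ) * C * E * (1 - z) ^ (n - j - 1) * (Complex.I * z)) := by
  have hI : Complex.I * Complex.I = -1 := Complex.I_mul_I
  obtain ⟨m, rfl⟩ : ∃ m, n = j + m := ⟨n - j, by omega⟩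
  rcases m with _ | k
  · have h1 : j + 0 - j = 0 := by omega
    rw [h1]
    push_cast
    linear_combination (-(j : ℂ) * (z - 1) * C * E) * hI
  · have h1 : j + (k + 1) - j = k + 1 := by omega
    rw [h1]
    have h2 : k + 1 - 1 = k := rfl
    rw [h2]
    push_cast
    linear_combination (-(j : ℂ) * (z - 1) * C * E * (1 - z) ^ (k + 1)
      + ((k : ℂ) + 1) * (z - 1) * C * E * (1 - z) ^ k * z) * hI

private lemma aux_exp_hasDerivAt {d : ℕ} (A : Matrix (Fin d) (Fin d) ℂ) (x0 : Fin d → ℂ)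
    (t : ℝ) :
    HasDerivAt (fun t' : ℝ => NormedSpace.exp ((t' : ℂ) • A) *ᵥ x0)
      ((A * NormedSpace.exp ((t : ℂ) • A)) *ᵥ x0) t := by
  letI : NormedRing (Matrix (Fin d) (Fin d) ℂ) := Matrix.linftyOpNormedRing
  letI : NormedAlgebra ℂ (Matrix (Fin d) (Fin d) ℂ) := Matrix.linftyOpNormedAlgebra
  haveI : CompleteSpace (Matrix (Fin d) (Fin d) ℂ) := FiniteDimensional.complete ℂ _
  have h0 := hasDerivAt_exp_smul_const' (𝕂 := ℂ) A ((t : ℂ))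
  have h2 : HasDerivAt (fun y : ℝ => (y : ℂ)) (1 : ℂ) t := by
    simpa using (hasDerivAt_id t).ofReal_comp
  have h : HasDerivAt (fun t' : ℝ => NormedSpace.exp ((t' : ℂ) • A)) (A * NormedSpace.exp ((t : ℂ) • A)) t := by
    have h3 := HasDerivAt.scomp t h0 h2
    rw [one_smul] at h3
    exact h3
  let L : Matrix (Fin d) (Fin d) ℂ →L[ℂ] (Fin d → ℂ) := LinearMap.toContinuousLinearMap
    { toFun := fun M => M *ᵥ x0
      map_add' := fun M N => Matrix.add_mulVec M N x0
      map_smul' := fun a M => Matrix.smul_mulVec a M x0 }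
  exact ((L.hasFDerivAt (x := NormedSpace.exp ((t : ℂ) • A))).restrictScalars ℝ).comp_hasDerivAt t h

/-- The characteristic function `φ(t,u) = ∑ⱼ C(n,j) e^{iuj}(1−e^{iu})^{n−j} exp(t Q_{(n−j)λ}) x(0)`
satisfies the PDE `∂φ/∂t = (Q + n(e^{iu}−1)diag(λ))φ + i(e^{iu}−1)diag(λ) ∂φ/∂u`. -/
theorem stmt_18 (d : ℕ) (hd : 1 ≤ d) (n : ℕ)
    (Q : Matrix (Fin d) (Fin d) ℝ) (l : Fin d → ℝ) (x0 : Fin d → ℂ)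
    (Qc : Matrix (Fin d) (Fin d) ℂ) (hQc : Qc = Q.map (Complex.ofReal))
    (lc : Fin d → ℂ) (hlc : lc = fun i => (l i : ℂ))
    (φ : ℝ → ℝ → (Fin d → ℂ))
    (hφ : ∀ t u : ℝ, φ t u =
      ∑ j ∈ Finset.range (n + 1),
        ((Nat.choose n j : ℂ) * Complex.exp (Complex.I * u * j) *
            (1 - Complex.exp (Complex.I * u)) ^ (n - j)) •
          (NormedSpace.exp ((t : ℂ) • (Qc - ((n - j : ℕ) : ℂ) • Matrix.diagonal lc)) *ᵥ x0)) :
    ∀ t u : ℝ, ∃ Dt Du : Fin d → ℂ,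
      HasDerivAt (fun t' : ℝ => φ t' u) Dt t ∧
      HasDerivAt (fun u' : ℝ => φ t u') Du u ∧
      Dt = (Qc + ((n : ℂ) * (Complex.exp (Complex.I * u) - 1)) • Matrix.diagonal lc) *ᵥ φ t u +
        (Complex.I * (Complex.exp (Complex.I * u) - 1)) • (Matrix.diagonal lc *ᵥ Du) := by
  intro t u
  set Dg := Matrix.diagonal lc with hDg
  set A : ℕ → Matrix (Fin d) (Fin d) ℂ := fun j => Qc - ((n - j : ℕ) : ℂ) • Dg with hA
  set w : ℕ → (Fin d → ℂ) := fun j => NormedSpace.exp ((t : ℂ) • A j) *ᵥ x0 with hw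
  set cc : ℕ → ℂ := fun j => (Nat.choose n j : ℂ) * Complex.exp (Complex.I * u * j) *
      (1 - Complex.exp (Complex.I * u)) ^ (n - j) with hcc
  set cd : ℕ → ℂ := fun j =>
      Complex.I * (j : ℂ) * (Nat.choose n j : ℂ) * Complex.exp (Complex.I * u * j) *
        (1 - Complex.exp (Complex.I * u)) ^ (n - j)
      - ((n - j : ℕ) : ℂ) * (Nat.choose n j : ℂ) * Complex.exp (Complex.I * u * j) *
        (1 - Complex.exp (Complex.I * u)) ^ (n - j - 1) *
        (Complex.I * Complex.exp (Complex.I * u)) with hcd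
  refine ⟨∑ j ∈ Finset.range (n + 1), cc j • (A j *ᵥ w j),
    ∑ j ∈ Finset.range (n + 1), cd j • w j, ?_, ?_, ?_⟩
  · have heq : (fun t' : ℝ => φ t' u) =
        fun t' : ℝ => ∑ j ∈ Finset.range (n + 1), cc j • (NormedSpace.exp ((t' : ℂ) • A j) *ᵥ x0) :=
      funext fun t' => hφ t' u
    rw [heq]
    refine HasDerivAt.fun_sum fun j _ => ?_
    have h := (aux_exp_hasDerivAt (A j) x0 t).const_smul (cc j)
    rwa [← Matrix.mulVec_mulVec] at h
  · have heq : (fun u' : ℝ => φ t u') =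
        fun u' : ℝ => ∑ j ∈ Finset.range (n + 1),
          ((Nat.choose n j : ℂ) * Complex.exp (Complex.I * u' * j) *
            (1 - Complex.exp (Complex.I * u')) ^ (n - j)) • w j :=
      funext fun u' => hφ t u'
    rw [heq]
    refine HasDerivAt.fun_sum fun j _ => ?_
    have hc : HasDerivAt (fun u' : ℝ => (Nat.choose n j : ℂ) *
        Complex.exp (Complex.I * u' * j) *
        (1 - Complex.exp (Complex.I * u')) ^ (n - j)) (cd j) u := by
      have h1 : HasDerivAt (fun y : ℂ => Complex.I * y * (j : ℂ))
          (Complex.I * 1 * (j : ℂ)) (u : ℂ) :=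
        ((hasDerivAt_id _).const_mul _).mul_const _
      have h2 := h1.cexp
      have h3 := ((((hasDerivAt_id ((u : ℝ) : ℂ)).const_mul Complex.I).cexp).const_sub 1).fun_pow
        (n - j)
      have h4 := (h2.const_mul ((Nat.choose n j : ℂ))).fun_mul h3
      have h5 := h4.comp_ofReal
      convert h5 using 1
      · rfl
      rw [hcd]
      simp only [id_eq]
      ring
    exact hc.smul_const (w j)
  · rw [hφ t u]
    have hMsum : ∀ (M : Matrix (Fin d) (Fin d) ℂ) (f : ℕ → Fin d → ℂ),
        M *ᵥ (∑ j ∈ Finset.range (n + 1), f j) = ∑ j ∈ Finset.range (n + 1), M *ᵥ f j := by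
      intro M f
      ext i
      simp only [Matrix.mulVec, dotProduct, Finset.sum_apply, Finset.mul_sum]
      exact Finset.sum_comm
    rw [hMsum, hMsum, Finset.smul_sum, ← Finset.sum_add_distrib]
    refine Finset.sum_congr rfl fun j hj => ?_
    have hjn : j ≤ n := Nat.lt_succ_iff.mp (Finset.mem_range.mp hj)
    have key := scalar_key (Nat.choose n j : ℂ) (Complex.exp (Complex.I * u * j))
      (Complex.exp (Complex.I * u)) n j hjn
    simp only [hcc, hcd, hA, hw]
    simp only [Matrix.sub_mulVec, Matrix.add_mulVec, Matrix.smul_mulVec,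
      Matrix.mulVec_smul]
    match_scalars
    · ring
    · linear_combination key
end
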